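/- arXiv:1501.06779 — 5 statements merged into one kernel-verified Lean document; each statement's English description precedes it below -/
import Mathlib

section
/- Let γ : [0, L] → S^n be a C² closed curve of length L parametrized by arc length, with geodesic curvature k in S^n, and let a₀ ≥ 2 be a constant. Then ∫₀^L (k(s)² + a₀) ds ≥ 4π√(a₀ − 1). -/
open Real intervalIntegral

local notation "⟪" x ", " y "⟫" => @inner ℝ _ _ x y

variable {F : Type*} [NormedAddCommGroup F] [InnerProductSpace ℝ F]

lemma sphere_orth (σ σ' : ℝ → F) (hd : ∀ s, HasDerivAt σ (σ' s) s)
    (hu : ∀ s, ‖σ s‖ = 1) (s : ℝ) : ⟪σ s, σ' s⟫ = 0 := by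
  have h1 : ∀ t, ⟪σ t, σ t⟫ = (1:ℝ) := by
    intro t
    rw [real_inner_self_eq_norm_sq, hu t]; norm_num
  have h2 : HasDerivAt (fun t => ⟪σ t, σ t⟫) (⟪σ s, σ' s⟫ + ⟪σ' s, σ s⟫) s :=
    (hd s).inner ℝ (hd s)
  have h3 : HasDerivAt (fun t => ⟪σ t, σ t⟫) 0 s := by
    have : (fun t => ⟪σ t, σ t⟫) = fun _ => (1:ℝ) := funext h1
    rw [this]; exact hasDerivAt_const s 1
  have h4 := h2.unique h3
  have h5 : ⟪σ' s, σ s⟫ = ⟪σ s, σ' s⟫ := real_inner_comm _ _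
  rw [h5] at h4; linarith

lemma arc_bound (σ σ' : ℝ → F) (hd : ∀ s, HasDerivAt σ (σ' s) s)
    (hc : Continuous σ') (hu : ∀ s, ‖σ s‖ = 1) (a b : ℝ) (hab : a ≤ b) :
    Real.arccos ⟪σ a, σ b⟫ ≤ ∫ s in a..b, ‖σ' s‖ := by
  set f : ℝ → ℝ := fun s => ⟪σ a, σ s⟫ with hfdef
  have hσcont : Continuous σ := continuous_iff_continuousAt.2
    fun s => (hd s).differentiableAt.continuousAt
  have hf : ∀ s, HasDerivAt f ⟪σ a, σ' s⟫ s := by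
    intro s
    have := (hasDerivAt_const s (σ a)).inner ℝ (hd s)
    simpa [hfdef] using this
  have hfcont : Continuous f := continuous_const.inner hσcont
  have hf1 : ∀ s, |f s| ≤ 1 := by
    intro s
    have := abs_real_inner_le_norm (σ a) (σ s)
    rwa [hu a, hu s, one_mul] at this
  have hfa : f a = 1 := by
    simp only [hfdef]
    rw [real_inner_self_eq_norm_sq, hu a]; norm_num
  -- pointwise derivative bound
  have hbound : ∀ s, |⟪σ a, σ' s⟫| ≤ ‖σ' s‖ * Real.sqrt (1 - f s ^ 2) := by
    intro s
    have horth := sphere_orth σ σ' hd hu s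
    have h1 : ⟪σ a, σ' s⟫ = ⟪σ a - f s • σ s, σ' s⟫ := by
      rw [inner_sub_left, real_inner_smul_left, horth]; ring
    have h2 : ‖σ a - f s • σ s‖ = Real.sqrt (1 - f s ^ 2) := by
      have : ‖σ a - f s • σ s‖ ^ 2 = 1 - f s ^ 2 := by
        rw [← real_inner_self_eq_norm_sq]
        rw [inner_sub_sub_self]
        rw [real_inner_smul_left, real_inner_smul_right, real_inner_smul_left,
          real_inner_smul_right]
        rw [real_inner_self_eq_norm_sq, real_inner_self_eq_norm_sq, hu a, hu s]
        have e2 : (inner ℝ (σ s) (σ a) : ℝ) = inner ℝ (σ a) (σ s) := real_inner_comm _ _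
        simp only [e2]
        show (1:ℝ) ^ 2 - f s * f s - f s * f s + f s * (f s * 1 ^ 2) = 1 - f s ^ 2
        ring
      rw [← this, Real.sqrt_sq (norm_nonneg _)]
    calc |⟪σ a, σ' s⟫| = |⟪σ a - f s • σ s, σ' s⟫| := by rw [h1]
      _ ≤ ‖σ a - f s • σ s‖ * ‖σ' s‖ := abs_real_inner_le_norm _ _
      _ = ‖σ' s‖ * Real.sqrt (1 - f s ^ 2) := by rw [h2]; ring
  -- main estimate for c ∈ (0,1)
  have key : ∀ c : ℝ, c ∈ Set.Ioo (0:ℝ) 1 →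
      Real.arccos (c * f b) ≤ Real.arccos c + ∫ s in a..b, ‖σ' s‖ := by
    intro c hc01
    obtain ⟨hc0, hc1⟩ := hc01
    have habs : ∀ s, |c * f s| < 1 := by
      intro s
      rw [abs_mul, abs_of_pos hc0]
      calc c * |f s| ≤ c * 1 := by nlinarith [hf1 s]
        _ < 1 := by linarith
    set g : ℝ → ℝ := fun s => Real.arccos (c * f s) with hgdef
    set D : ℝ → ℝ := fun s => -(1 / Real.sqrt (1 - (c * f s) ^ 2)) * (c * ⟪σ a, σ' s⟫)
      with hDdef
    have hg : ∀ s, HasDerivAt g (D s) s := by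
      intro s
      have h1 : HasDerivAt (fun t => c * f t) (c * ⟪σ a, σ' s⟫) s := (hf s).const_mul c
      have hne1 : c * f s ≠ -1 := by have := habs s; intro h; rw [h] at this; simp at this
      have hne2 : c * f s ≠ 1 := by have := habs s; intro h; rw [h] at this; simp at this
      have := (Real.hasDerivAt_arccos hne1 hne2).comp s h1; exact this
    have hpos : ∀ s, 0 < 1 - (c * f s) ^ 2 := by
      intro s
      have := habs s
      nlinarith [abs_nonneg (c * f s), sq_abs (c * f s)]
    have hDcont : Continuous D := by
      apply Continuous.mul
      · apply Continuous.neg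
        apply Continuous.div continuous_const
        · exact (Real.continuous_sqrt.comp (by continuity))
        · intro s
          exact (Real.sqrt_pos.2 (hpos s)).ne'
      · exact continuous_const.mul (continuous_const.inner hc)
    have hftc : ∫ s in a..b, D s = g b - g a :=
      intervalIntegral.integral_eq_sub_of_hasDerivAt (fun s _ => hg s)
        (hDcont.intervalIntegrable a b)
    have hDb : ∀ s, |D s| ≤ ‖σ' s‖ := by
      intro s
      have hsq : Real.sqrt (1 - (c * f s) ^ 2) > 0 := Real.sqrt_pos.2 (hpos s)
      rw [hDdef]
      simp only [abs_mul, abs_neg, abs_div, abs_one]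
      rw [abs_of_pos hsq, abs_of_pos hc0]
      rw [div_mul_eq_mul_div, one_mul, div_le_iff₀ hsq]
      calc c * |⟪σ a, σ' s⟫| ≤ c * (‖σ' s‖ * Real.sqrt (1 - f s ^ 2)) := by
            nlinarith [hbound s, abs_nonneg ⟪σ a, σ' s⟫]
        _ = ‖σ' s‖ * (c * Real.sqrt (1 - f s ^ 2)) := by ring
        _ ≤ ‖σ' s‖ * Real.sqrt (1 - (c * f s) ^ 2) := by
            apply mul_le_mul_of_nonneg_left _ (norm_nonneg _)
            have hfs2 : (0:ℝ) ≤ 1 - f s ^ 2 := by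
              nlinarith [hf1 s, sq_abs (f s), abs_nonneg (f s)]
            have hsq2 : (c * Real.sqrt (1 - f s ^ 2)) ^ 2 ≤ 1 - (c * f s) ^ 2 := by
              rw [mul_pow, Real.sq_sqrt hfs2]; nlinarith
            have h9 : c * Real.sqrt (1 - f s ^ 2)
                = Real.sqrt ((c * Real.sqrt (1 - f s ^ 2)) ^ 2) :=
              (Real.sqrt_sq (by positivity)).symm
            rw [h9]
            exact Real.sqrt_le_sqrt hsq2
    have hint : |∫ s in a..b, D s| ≤ ∫ s in a..b, ‖σ' s‖ := by
      refine (intervalIntegral.abs_integral_le_integral_abs hab).trans ?_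
      apply intervalIntegral.integral_mono_on hab
        ((hDcont.abs).intervalIntegrable a b) ((hc.norm).intervalIntegrable a b)
      exact fun s _ => hDb s
    have hga : g a = Real.arccos c := by rw [hgdef]; simp [hfa]
    have : g b ≤ g a + ∫ s in a..b, ‖σ' s‖ := by
      have := abs_le.1 hint
      linarith [hftc ▸ this.2, this.2, hftc]
    rw [hga] at this
    exact this
  -- pass to the limit c → 1⁻
  have hlim : Filter.Tendsto (fun c : ℝ => Real.arccos (c * f b) - Real.arccos c)
      (nhdsWithin 1 (Set.Ioo (0:ℝ) 1)) (nhds (Real.arccos (f b))) := by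
    have h1 : Filter.Tendsto (fun c : ℝ => Real.arccos (c * f b))
        (nhdsWithin 1 (Set.Ioo (0:ℝ) 1)) (nhds (Real.arccos (f b))) := by
      apply Filter.Tendsto.comp (Real.continuous_arccos.continuousAt (x := f b))
      have h3 : Filter.Tendsto (fun c : ℝ => c * f b) (nhds 1) (nhds (f b)) := by
        have := (continuous_mul_right (f b)).tendsto (1:ℝ)
        simpa using this
      exact h3.mono_left nhdsWithin_le_nhds
    have h2 : Filter.Tendsto (fun c : ℝ => Real.arccos c)
        (nhdsWithin 1 (Set.Ioo (0:ℝ) 1)) (nhds 0) := by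
      have := Real.continuous_arccos.tendsto (1:ℝ)
      rw [Real.arccos_one] at this
      exact this.mono_left nhdsWithin_le_nhds
    simpa using h1.sub h2
  have hne : (nhdsWithin (1:ℝ) (Set.Ioo (0:ℝ) 1)).NeBot := by
    apply mem_closure_iff_nhdsWithin_neBot.1
    rw [closure_Ioo (by norm_num : (0:ℝ) ≠ 1)]
    exact Set.right_mem_Icc.2 (by norm_num)
  apply le_of_tendsto hlim
  filter_upwards [self_mem_nhdsWithin] with c hcm
  linarith [key c hcm]

/-- Fenchel's theorem for closed curves on the unit sphere: the total curvature (in the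
ambient Euclidean space) of a closed unit-speed spherical curve is at least `2π`. -/
lemma fenchel_sphere (L : ℝ) (hL : 0 < L) (γ T T' : ℝ → F)
    (hdγ : ∀ s, HasDerivAt γ (T s) s) (hdT : ∀ s, HasDerivAt T (T' s) s)
    (hcT' : Continuous T')
    (hγL : γ L = γ 0) (hTL : T L = T 0)
    (huT : ∀ s, ‖T s‖ = 1) :
    2 * π ≤ ∫ s in (0:ℝ)..L, ‖T' s‖ := by
  have hcT : Continuous T := continuous_iff_continuousAt.2
    fun s => (hdT s).differentiableAt.continuousAt
  have hcnT' : Continuous fun s => ‖T' s‖ := hcT'.norm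
  set K : ℝ := ∫ s in (0:ℝ)..L, ‖T' s‖ with hKdef
  by_contra hlt
  push_neg at hlt
  -- the primitive Λ
  set Λ : ℝ → ℝ := fun s => ∫ t in (0:ℝ)..s, ‖T' t‖ with hΛdef
  have hΛd : ∀ s, HasDerivAt Λ ‖T' s‖ s := fun s =>
    (hcnT'.integral_hasStrictDerivAt 0 s).hasDerivAt
  have hΛc : Continuous Λ := continuous_iff_continuousAt.2
    fun s => (hΛd s).differentiableAt.continuousAt
  have hΛ0 : Λ 0 = 0 := intervalIntegral.integral_same
  have hΛL : Λ L = K := rfl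
  have hseg : ∀ a b : ℝ, ∫ s in a..b, ‖T' s‖ = Λ b - Λ a := by
    intro a b
    have h := intervalIntegral.integral_add_adjacent_intervals
      (hcnT'.intervalIntegrable (μ := MeasureTheory.volume) 0 a)
      (hcnT'.intervalIntegrable (μ := MeasureTheory.volume) a b)
    simp only [hΛdef]
    linarith [h]
  have harc : ∀ a b : ℝ, a ≤ b → Real.arccos ⟪T a, T b⟫ ≤ Λ b - Λ a := by
    intro a b hab
    rw [← hseg]
    exact arc_bound T T' hdT hcT' huT a b hab
  -- K is positive
  have hKnonneg : 0 ≤ K := by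
    rw [hKdef, intervalIntegral.integral_of_le hL.le]
    exact MeasureTheory.integral_nonneg fun s => norm_nonneg _
  -- choose the halfway point s₁
  obtain ⟨s₁, hs₁mem, hs₁⟩ : ∃ s₁ ∈ Set.Icc (0:ℝ) L, Λ s₁ = K / 2 := by
    have h := intermediate_value_Icc hL.le hΛc.continuousOn
    have : K / 2 ∈ Set.Icc (Λ 0) (Λ L) := by
      rw [hΛ0, hΛL]; constructor <;> linarith
    obtain ⟨s₁, hmem, heq⟩ := h this
    exact ⟨s₁, hmem, heq⟩
  set p : F := T 0 with hpdef
  set q : F := T s₁ with hqdef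
  have hcs : |⟪p, q⟫| ≤ 1 := by
    have := abs_real_inner_le_norm p q
    rwa [huT 0, huT s₁, one_mul] at this
  have hKltπ : K / 2 < π := by linarith
  have hpq : Real.arccos ⟪p, q⟫ ≤ K / 2 := by
    have := harc 0 s₁ hs₁mem.1
    rwa [hΛ0, hs₁, sub_zero] at this
  have hgt : (-1:ℝ) < ⟪p, q⟫ := by
    rcases lt_or_ge (-1:ℝ) ⟪p, q⟫ with h | h
    · exact h
    · exfalso
      have h1 : ⟪p, q⟫ = -1 := le_antisymm (by linarith [abs_le.1 hcs]) h |>.symm ▸ rfl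
      have h1 : ⟪p, q⟫ = -1 := by
        have := (abs_le.1 hcs).1; linarith
      rw [h1] at hpq
      rw [Real.arccos_neg_one] at hpq
      linarith [Real.pi_pos]
  have hpq0 : (0:ℝ) < 1 + ⟪p, q⟫ := by linarith
  have hnpq : 0 < ‖p + q‖ := by
    rw [norm_pos_iff]
    intro h0
    have : ‖p + q‖ ^ 2 = 2 + 2 * ⟪p, q⟫ := by
      rw [norm_add_sq_real, huT 0, huT s₁]; ring
    rw [h0] at this; simp at this; linarith
  set m : F := ‖p + q‖⁻¹ • (p + q) with hmdef
  -- the function ψ = ⟪T ·, m⟫ integrates to zero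
  set ψ : ℝ → ℝ := fun s => ⟪T s, m⟫ with hψdef
  have hψc : Continuous ψ := hcT.inner continuous_const
  have hψint : ∫ s in (0:ℝ)..L, ψ s = 0 := by
    have hφ : ∀ s, HasDerivAt (fun t => ⟪γ t, m⟫) (ψ s) s := by
      intro s
      have := (hdγ s).inner ℝ (hasDerivAt_const s m)
      simpa [hψdef] using this
    rw [intervalIntegral.integral_eq_sub_of_hasDerivAt (fun s _ => hφ s)
      (hψc.intervalIntegrable 0 L)]
    rw [hγL]; ring
  have hinner_m : ∀ x : F, ⟪x, m⟫ = ‖p + q‖⁻¹ * ⟪x, p + q⟫ := by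
    intro x
    rw [hmdef, real_inner_smul_right]
  have hψ0 : 0 < ψ 0 := by
    rw [hψdef]
    show (0:ℝ) < ⟪T 0, m⟫
    rw [hinner_m, inner_add_right]
    have : ⟪p, p⟫ = (1:ℝ) := by
      rw [real_inner_self_eq_norm_sq, huT 0]; norm_num
    rw [← hpdef, this]
    positivity
  have hψ1 : 0 < ψ s₁ := by
    rw [hψdef]
    show (0:ℝ) < ⟪T s₁, m⟫
    rw [hinner_m, inner_add_right]
    have h1 : ⟪q, q⟫ = (1:ℝ) := by
      rw [real_inner_self_eq_norm_sq, huT s₁]; norm_num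
    have h2 : ⟪q, p⟫ = ⟪p, q⟫ := real_inner_comm _ _
    rw [← hqdef, h1, h2]
    have : 0 < ⟪p, q⟫ + 1 := by linarith
    positivity
  -- there is a point where ψ ≤ 0
  obtain ⟨sx, hsxmem, hsx⟩ : ∃ sx ∈ Set.Icc (0:ℝ) L, ψ sx ≤ 0 := by
    by_contra hcon
    push_neg at hcon
    have hpos : 0 < ∫ s in (0:ℝ)..L, ψ s :=
      intervalIntegral.intervalIntegral_pos_of_pos_on (hψc.intervalIntegrable 0 L)
        (fun x hx => hcon x ⟨hx.1.le, hx.2.le⟩) hL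
    linarith [hψint ▸ hpos]
  -- orthogonality relation at a zero of ψ
  have hzero : ∀ s₀ : ℝ, ψ s₀ = 0 → ⟪T s₀, q⟫ = -⟪T s₀, p⟫ := by
    intro s₀ h0
    have h1 : ⟪T s₀, p + q⟫ = 0 := by
      have := hinner_m (T s₀)
      rw [hψdef] at h0
      have h2 : ‖p + q‖⁻¹ * ⟪T s₀, p + q⟫ = 0 := by rw [← this]; exact h0
      rcases mul_eq_zero.1 h2 with h | h
      · exact absurd h (inv_ne_zero hnpq.ne')
      · exact h
    rw [inner_add_right] at h1
    linarith
  -- the contradiction, in the two cases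
  rcases le_or_gt sx s₁ with hcase | hcase
  · -- zero in the first half
    obtain ⟨s₀, hs₀mem, hs₀⟩ : ∃ s₀ ∈ Set.Icc (0:ℝ) sx, ψ s₀ = 0 := by
      have h := intermediate_value_Icc' hsxmem.1 hψc.continuousOn
      have : (0:ℝ) ∈ Set.Icc (ψ sx) (ψ 0) := ⟨hsx, hψ0.le⟩
      obtain ⟨s₀, hmem, heq⟩ := h this
      exact ⟨s₀, hmem, heq⟩
    have hA1 : Real.arccos ⟪T 0, T s₀⟫ ≤ Λ s₀ - Λ 0 := harc 0 s₀ hs₀mem.1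
    have hA2 : Real.arccos ⟪T s₀, T s₁⟫ ≤ Λ s₁ - Λ s₀ :=
      harc s₀ s₁ (hs₀mem.2.trans hcase)
    have hx := hzero s₀ hs₀
    have hcomm : ⟪T 0, T s₀⟫ = ⟪T s₀, T 0⟫ := real_inner_comm _ _
    rw [show ⟪T s₀, T s₁⟫ = -⟪T s₀, T 0⟫ from hx, Real.arccos_neg] at hA2
    rw [hcomm] at hA1
    have : π ≤ Λ s₁ - Λ 0 := by linarith
    rw [hΛ0, hs₁] at this
    linarith
  · -- zero in the second half
    obtain ⟨s₀, hs₀mem, hs₀⟩ : ∃ s₀ ∈ Set.Icc s₁ sx, ψ s₀ = 0 := by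
      have h := intermediate_value_Icc' hcase.le hψc.continuousOn
      have : (0:ℝ) ∈ Set.Icc (ψ sx) (ψ s₁) := ⟨hsx, hψ1.le⟩
      obtain ⟨s₀, hmem, heq⟩ := h this
      exact ⟨s₀, hmem, heq⟩
    have hA1 : Real.arccos ⟪T s₁, T s₀⟫ ≤ Λ s₀ - Λ s₁ := harc s₁ s₀ hs₀mem.1
    have hA2 : Real.arccos ⟪T s₀, T L⟫ ≤ Λ L - Λ s₀ :=
      harc s₀ L (hs₀mem.2.trans hsxmem.2)
    have hx := hzero s₀ hs₀
    have hcomm : ⟪T s₁, T s₀⟫ = ⟪T s₀, T s₁⟫ := real_inner_comm _ _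
    rw [hTL] at hA2
    rw [show ⟪T s₀, T 0⟫ = -⟪T s₀, T s₁⟫ from by linarith [hx], Real.arccos_neg] at hA2
    rw [hcomm] at hA1
    have : π ≤ Λ L - Λ s₁ := by linarith
    rw [hΛL, hs₁] at this
    linarith

/-- Lemma 3.2 (Langer–Singer): for a C² closed unit-speed curve `γ` of length `L` in the
unit sphere `Sⁿ ⊂ ℝⁿ⁺¹` with geodesic curvature `k` (so `k s = ‖γ'' s + γ s‖`), and any
constant `a₀ ≥ 2`, one has `∫₀ᴸ (k² + a₀) ds ≥ 4π√(a₀ − 1)`. -/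
theorem elastic_energy_lower_bound (n : ℕ) (L : ℝ) (hL : 0 < L)
    (γ : ℝ → EuclideanSpace ℝ (Fin (n + 1)))
    (hsm : ContDiff ℝ 2 γ)
    (hclosed : ∀ s, γ (s + L) = γ s)
    (hsph : ∀ s, ‖γ s‖ = 1)
    (hunit : ∀ s, ‖deriv γ s‖ = 1)
    (k : ℝ → ℝ) (hk : ∀ s, k s = ‖deriv (deriv γ) s + γ s‖)
    (a₀ : ℝ) (ha₀ : 2 ≤ a₀) :
    4 * π * Real.sqrt (a₀ - 1) ≤ ∫ s in (0:ℝ)..L, (k s ^ 2 + a₀) := by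
  -- differentiability bookkeeping
  have hsm' : ContDiff ℝ (1 + 1) γ := hsm
  have hdγ : Differentiable ℝ γ := hsm.differentiable (by norm_num)
  have hC1 : ContDiff ℝ 1 (deriv γ) := (contDiff_succ_iff_deriv.mp hsm').2.2
  have hdT : Differentiable ℝ (deriv γ) := (contDiff_one_iff_deriv.mp hC1).1
  have hcT' : Continuous (deriv (deriv γ)) := (contDiff_one_iff_deriv.mp hC1).2
  have hdγ' : ∀ s, HasDerivAt γ (deriv γ s) s := fun s => (hdγ s).hasDerivAt
  have hdT' : ∀ s, HasDerivAt (deriv γ) (deriv (deriv γ) s) s := fun s => (hdT s).hasDerivAt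
  have hcγ : Continuous γ := hdγ.continuous
  -- closedness of γ and T
  have hγL : γ L = γ 0 := by have := hclosed 0; rwa [zero_add] at this
  have hTper : ∀ s, deriv γ (s + L) = deriv γ s := by
    intro s
    have h1 : HasDerivAt (fun t => γ (t + L)) (deriv γ (s + L)) s :=
      HasDerivAt.comp_add_const s L (hdγ' (s + L))
    have h2 : (fun t => γ (t + L)) = γ := funext hclosed
    rw [h2] at h1
    exact h1.unique (hdγ' s)
  have hTL : deriv γ L = deriv γ 0 := by have := hTper 0; rwa [zero_add] at this
  -- inner product identities
  have horth : ∀ s, ⟪γ s, deriv γ s⟫ = 0 := sphere_orth γ (deriv γ) hdγ' hsph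
  have hin2 : ∀ s, ⟪γ s, deriv (deriv γ) s⟫ = -1 := by
    intro s
    have h1 : ∀ t, (fun u => ⟪γ u, deriv γ u⟫) t = (0:ℝ) := horth
    have h2 : HasDerivAt (fun u => ⟪γ u, deriv γ u⟫)
        (⟪γ s, deriv (deriv γ) s⟫ + ⟪deriv γ s, deriv γ s⟫) s :=
      (hdγ' s).inner ℝ (hdT' s)
    have h3 : HasDerivAt (fun u => ⟪γ u, deriv γ u⟫) 0 s := by
      rw [funext h1]; exact hasDerivAt_const s 0
    have h4 := h2.unique h3
    have h5 : ⟪deriv γ s, deriv γ s⟫ = (1:ℝ) := by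
      rw [real_inner_self_eq_norm_sq, hunit s]; norm_num
    rw [h5] at h4; linarith
  -- curvature identity : k² + a₀ = ‖γ''‖² + (a₀ - 1)
  have hk2 : ∀ s, k s ^ 2 = ‖deriv (deriv γ) s‖ ^ 2 - 1 := by
    intro s
    rw [hk s, norm_add_sq_real, hsph s]
    have : ⟪deriv (deriv γ) s, γ s⟫ = -1 := by
      rw [real_inner_comm]; exact hin2 s
    rw [this]; ring
  -- Fenchel
  have hfen : 2 * π ≤ ∫ s in (0:ℝ)..L, ‖deriv (deriv γ) s‖ :=
    fenchel_sphere L hL γ (deriv γ) (deriv (deriv γ)) hdγ' hdT' hcT' hγL hTL hunit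
  -- the sqrt constant
  have ha1 : (1:ℝ) ≤ a₀ - 1 := by linarith
  have hsa : Real.sqrt (a₀ - 1) ^ 2 = a₀ - 1 := Real.sq_sqrt (by linarith)
  have hsa1 : (1:ℝ) ≤ Real.sqrt (a₀ - 1) := by
    nlinarith [Real.sqrt_nonneg (a₀ - 1)]
  -- pointwise AM–GM bound
  have hpt : ∀ s, 2 * Real.sqrt (a₀ - 1) * ‖deriv (deriv γ) s‖ ≤ k s ^ 2 + a₀ := by
    intro s
    have h1 := hk2 s
    nlinarith [sq_nonneg (‖deriv (deriv γ) s‖ - Real.sqrt (a₀ - 1))]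
  -- integrate
  have hcont : Continuous fun s => k s ^ 2 + a₀ := by
    have : (fun s => k s ^ 2 + a₀) = fun s => ‖deriv (deriv γ) s + γ s‖ ^ 2 + a₀ := by
      funext s; rw [hk s]
    rw [this]
    exact (((hcT'.add hcγ).norm.pow 2).add continuous_const)
  have hmono : ∫ s in (0:ℝ)..L, 2 * Real.sqrt (a₀ - 1) * ‖deriv (deriv γ) s‖
      ≤ ∫ s in (0:ℝ)..L, (k s ^ 2 + a₀) := by
    apply intervalIntegral.integral_mono_on hL.le
      ((continuous_const.mul hcT'.norm).intervalIntegrable (μ := MeasureTheory.volume) 0 L)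
      (hcont.intervalIntegrable (μ := MeasureTheory.volume) 0 L)
    exact fun s _ => hpt s
  have hconst : ∫ s in (0:ℝ)..L, 2 * Real.sqrt (a₀ - 1) * ‖deriv (deriv γ) s‖
      = 2 * Real.sqrt (a₀ - 1) * ∫ s in (0:ℝ)..L, ‖deriv (deriv γ) s‖ := by
    rw [← intervalIntegral.integral_const_mul]
  calc 4 * π * Real.sqrt (a₀ - 1)
      = 2 * Real.sqrt (a₀ - 1) * (2 * π) := by ring
    _ ≤ 2 * Real.sqrt (a₀ - 1) * ∫ s in (0:ℝ)..L, ‖deriv (deriv γ) s‖ := by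
        apply mul_le_mul_of_nonneg_left hfen
        positivity
    _ = ∫ s in (0:ℝ)..L, 2 * Real.sqrt (a₀ - 1) * ‖deriv (deriv γ) s‖ := hconst.symm
    _ ≤ ∫ s in (0:ℝ)..L, (k s ^ 2 + a₀) := hmono
end

section
/- Let a₀ ≥ 2. Among closed curves γ in S^n achieving equality in ∫₀^L (k² + a₀) ds ≥ 4π√(a₀ − 1), the curvature k is constant equal to √(a₀ − 2). -/
open Real intervalIntegral
open RealInnerProductSpace

variable {E : Type*} [NormedAddCommGroup E] [InnerProductSpace ℝ E]

/-- If `‖T s‖ = 1` for all `s` and `T` is differentiable, then `⟪T s, T' s⟫ = 0`. -/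
lemma inner_deriv_zero_of_norm_one {T : ℝ → E} (hT : Differentiable ℝ T)
    (hnorm : ∀ s, ‖T s‖ = 1) (s : ℝ) : ⟪T s, deriv T s⟫ = 0 := by
  have h1 : (fun t => ⟪T t, T t⟫) = fun _ => (1:ℝ) := by
    funext t
    rw [real_inner_self_eq_norm_sq, hnorm]; norm_num
  have h2 : HasDerivAt (fun t => ⟪T t, T t⟫) (⟪T s, deriv T s⟫ + ⟪deriv T s, T s⟫) s :=
    (hT s).hasDerivAt.inner ℝ (hT s).hasDerivAt
  rw [h1] at h2
  have h3 : (⟪T s, deriv T s⟫ + ⟪deriv T s, T s⟫ : ℝ) = 0 :=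
    h2.unique (hasDerivAt_const s 1)
  have h4 := real_inner_comm (T s) (deriv T s)
  linarith

/-- Length of a spherical curve bounds the spherical (great-circle) distance. -/
lemma arccos_le_integral_norm_deriv {T : ℝ → E} (hT : ContDiff ℝ 1 T)
    (hnorm : ∀ s, ‖T s‖ = 1) {a b : ℝ} (hab : a ≤ b) :
    Real.arccos ⟪T a, T b⟫ ≤ ∫ s in a..b, ‖deriv T s‖ := by
  have hTd : Differentiable ℝ T := hT.differentiable one_ne_zero
  have hT'c : Continuous (deriv T) := (contDiff_one_iff_deriv.mp hT).2
  have horth := inner_deriv_zero_of_norm_one hTd hnorm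
  set u := T a with hu
  set h : ℝ → ℝ := fun s => ⟪u, T s⟫ with hh
  have hhd : ∀ s, HasDerivAt h ⟪u, deriv T s⟫ s := by
    intro s
    have := (hasDerivAt_const s u).inner ℝ (hTd s).hasDerivAt
    simpa using this
  have habs : ∀ s, |h s| ≤ 1 := by
    intro s
    calc |h s| ≤ ‖u‖ * ‖T s‖ := abs_real_inner_le_norm u (T s)
    _ = 1 := by rw [hu, hnorm, hnorm]; ring
  have key : ∀ s, |⟪u, deriv T s⟫| ≤ ‖deriv T s‖ * Real.sqrt (1 - h s ^ 2) := by
    intro s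
    have hw : ⟪u - h s • T s, deriv T s⟫ = ⟪u, deriv T s⟫ := by
      rw [inner_sub_left, real_inner_smul_left, horth s]; ring
    have hwnorm : ‖u - h s • T s‖ ^ 2 = 1 - h s ^ 2 := by
      have h1 : ‖u‖ = 1 := hnorm a
      have h2 : ‖T s‖ = 1 := hnorm s
      have h3 : ⟪u, T s⟫ = h s := rfl
      rw [norm_sub_sq_real, real_inner_smul_right, norm_smul, h1, h2, h3,
        Real.norm_eq_abs, mul_one, one_pow, sq_abs]
      ring
    calc |⟪u, deriv T s⟫| = |⟪u - h s • T s, deriv T s⟫| := by rw [hw]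
      _ ≤ ‖u - h s • T s‖ * ‖deriv T s‖ := abs_real_inner_le_norm _ _
      _ = Real.sqrt (1 - h s ^ 2) * ‖deriv T s‖ := by
          rw [← Real.sqrt_sq (norm_nonneg (u - h s • T s)), hwnorm]
      _ = ‖deriv T s‖ * Real.sqrt (1 - h s ^ 2) := mul_comm _ _
  set ψ : ℝ → ℝ := fun s => ∫ t in a..s, ‖deriv T t‖ with hψ
  have hψd : ∀ s, HasDerivAt ψ ‖deriv T s‖ s := by
    intro s
    exact intervalIntegral.integral_hasDerivAt_right
      ((hT'c.norm).intervalIntegrable a s)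
      ((hT'c.norm).stronglyMeasurableAtFilter _ _)
      (hT'c.norm.continuousAt)
  have main : ∀ c ∈ Set.Ioo (0:ℝ) 1, Real.arccos (c * h b) - Real.arccos c ≤ ψ b := by
    intro c hc
    obtain ⟨hc0, hc1⟩ := hc
    have hch : ∀ s, |c * h s| < 1 := by
      intro s
      rw [abs_mul, abs_of_pos hc0]
      calc c * |h s| ≤ c * 1 := by nlinarith [habs s]
        _ < 1 := by linarith
    set φ : ℝ → ℝ := fun s => Real.arccos (c * h s) with hφ
    have hφd : ∀ s, HasDerivAt φ
        (-(1 / Real.sqrt (1 - (c * h s) ^ 2)) * (c * ⟪u, deriv T s⟫)) s := by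
      intro s
      have h1 : HasDerivAt (fun t => c * h t) (c * ⟪u, deriv T s⟫) s := (hhd s).const_mul c
      have h2 := Real.hasDerivAt_arccos (abs_lt.mp (hch s)).1.ne' (abs_lt.mp (hch s)).2.ne
      exact HasDerivAt.comp (h₂ := Real.arccos) (h := fun t => c * h t) s h2 h1
    have hDd : ∀ s, HasDerivAt (fun s => ψ s - φ s)
        (‖deriv T s‖ - (-(1 / Real.sqrt (1 - (c * h s) ^ 2)) * (c * ⟪u, deriv T s⟫))) s :=
      fun s => (hψd s).sub (hφd s)
    have hD0 : ∀ s, 0 ≤ ‖deriv T s‖ -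
        (-(1 / Real.sqrt (1 - (c * h s) ^ 2)) * (c * ⟪u, deriv T s⟫)) := by
      intro s
      set I := ⟪u, deriv T s⟫ with hI
      set A := Real.sqrt (1 - (c * h s) ^ 2) with hA
      have hA0 : 0 < A := Real.sqrt_pos.mpr (by nlinarith [hch s, sq_abs (c * h s), abs_nonneg (c * h s)])
      have hcs : c * Real.sqrt (1 - h s ^ 2) ≤ A := by
        have e1 : c * Real.sqrt (1 - h s ^ 2) = Real.sqrt (c ^ 2 * (1 - h s ^ 2)) := by
          rw [Real.sqrt_mul (sq_nonneg c), Real.sqrt_sq hc0.le]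
        rw [hA, e1]
        apply Real.sqrt_le_sqrt
        nlinarith [habs s, sq_abs (h s)]
      have hineq : c * |I| ≤ A * ‖deriv T s‖ := by
        calc c * |I| ≤ c * (‖deriv T s‖ * Real.sqrt (1 - h s ^ 2)) :=
              mul_le_mul_of_nonneg_left (key s) hc0.le
          _ = (c * Real.sqrt (1 - h s ^ 2)) * ‖deriv T s‖ := by ring
          _ ≤ A * ‖deriv T s‖ := mul_le_mul_of_nonneg_right hcs (norm_nonneg _)
      have h5 : -(c * I) ≤ A * ‖deriv T s‖ := by
        calc -(c * I) = c * (-I) := by ring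
          _ ≤ c * |I| := mul_le_mul_of_nonneg_left (neg_le_abs I) hc0.le
          _ ≤ A * ‖deriv T s‖ := hineq
      have h7 : (-(c * I)) / A ≤ ‖deriv T s‖ := by
        rw [div_le_iff₀ hA0]; linarith [h5]
      have h6 : -(1 / A) * (c * I) = (-(c * I)) / A := by ring
      linarith [h6 ▸ h7]
    have hDmono : Monotone (fun s => ψ s - φ s) := by
      apply monotone_of_deriv_nonneg (fun s => (hDd s).differentiableAt)
      intro s
      rw [(hDd s).deriv]
      exact hD0 s
    have hDab := hDmono hab
    have hψa : ψ a = 0 := intervalIntegral.integral_same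
    have hha : h a = 1 := by
      show (⟪u, T a⟫ : ℝ) = 1
      rw [hu, real_inner_self_eq_norm_sq, hnorm]; norm_num
    simp only [hψa, hha, mul_one] at hDab
    have hφa : φ a = Real.arccos c := by rw [hφ]; simp [hha]
    have hφb : φ b = Real.arccos (c * h b) := rfl
    rw [hφa, hφb] at hDab
    linarith
  have hlim : Filter.Tendsto (fun c => Real.arccos (c * h b) - Real.arccos c)
      (nhdsWithin 1 (Set.Iio 1)) (nhds (Real.arccos (h b) - Real.arccos 1)) := by
    apply Filter.Tendsto.sub
    · have h1 : Filter.Tendsto (fun c : ℝ => c * h b) (nhdsWithin 1 (Set.Iio 1)) (nhds (h b)) := by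
        have := (continuous_id.mul (continuous_const (y := h b))).continuousAt (x := (1:ℝ))
        have h2 := this.tendsto.mono_left (nhdsWithin_le_nhds (s := Set.Iio 1))
        convert h2 using 2 <;> simp
      exact (Real.continuous_arccos.continuousAt.tendsto).comp h1
    · exact (Real.continuous_arccos.continuousAt.tendsto).mono_left nhdsWithin_le_nhds
  rw [Real.arccos_one, sub_zero] at hlim
  exact le_of_tendsto hlim (Filter.eventually_of_mem
    (Ioo_mem_nhdsLT (by norm_num : (0:ℝ) < 1)) main)

/-- Fenchel-type bound: a closed spherical curve with vanishing mean has length `≥ 2π`. -/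
lemma fenchel_bound [CompleteSpace E] {T : ℝ → E} (hT : ContDiff ℝ 1 T)
    (hnorm : ∀ s, ‖T s‖ = 1) {L : ℝ} (hL : 0 < L) (hper : T L = T 0)
    (hint : (∫ s in (0:ℝ)..L, T s) = 0) :
    2 * π ≤ ∫ s in (0:ℝ)..L, ‖deriv T s‖ := by
  have hTc : Continuous T := hT.continuous
  have hT'c : Continuous (deriv T) := (contDiff_one_iff_deriv.mp hT).2
  set ℓ : ℝ := ∫ s in (0:ℝ)..L, ‖deriv T s‖ with hℓ
  have hℓ0 : 0 ≤ ℓ := intervalIntegral.integral_nonneg hL.le (fun s _ => norm_nonneg _)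
  set ψ : ℝ → ℝ := fun s => ∫ t in (0:ℝ)..s, ‖deriv T t‖ with hψ
  have hψd : ∀ s, HasDerivAt ψ ‖deriv T s‖ s := fun s =>
    intervalIntegral.integral_hasDerivAt_right
      ((hT'c.norm).intervalIntegrable 0 s)
      ((hT'c.norm).stronglyMeasurableAtFilter _ _)
      (hT'c.norm.continuousAt)
  have hψc : Continuous ψ := by
    have : Differentiable ℝ ψ := fun s => (hψd s).differentiableAt
    exact this.continuous
  -- find the midpoint s_m
  have hivt : (ℓ / 2) ∈ ψ '' Set.Icc 0 L := by
    apply intermediate_value_Icc hL.le hψc.continuousOn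
    constructor
    · show ψ 0 ≤ ℓ / 2
      rw [hψ]; simp only [intervalIntegral.integral_same]; linarith
    · show ℓ / 2 ≤ ψ L
      have : ψ L = ℓ := rfl
      rw [this]; linarith
  obtain ⟨sm, hsm_mem, hsm⟩ := hivt
  set p := T 0 with hp
  set q := T sm with hq
  -- find a zero of ⟪p + q, T ·⟫ on [0, L]
  have hfc : Continuous (fun s => (⟪p + q, T s⟫ : ℝ)) := by
    exact (continuous_const.inner hTc)
  have hintf : (∫ s in (0:ℝ)..L, (⟪p + q, T s⟫ : ℝ)) = 0 := by
    have := (innerSL ℝ (p + q)).intervalIntegral_comp_comm ((hTc.intervalIntegrable 0 L : IntervalIntegrable T MeasureTheory.volume 0 L))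
    simp only [innerSL_apply_apply] at this
    rw [this, hint, inner_zero_right]
  have hex_nonpos : ∃ t ∈ Set.Icc (0:ℝ) L, (⟪p + q, T t⟫ : ℝ) ≤ 0 := by
    by_contra hcon
    push_neg at hcon
    have hpos : 0 < ∫ s in (0:ℝ)..L, (⟪p + q, T s⟫ : ℝ) :=
      intervalIntegral.intervalIntegral_pos_of_pos_on
        (hfc.intervalIntegrable 0 L)
        (fun x hx => hcon x ⟨hx.1.le, hx.2.le⟩) hL
    rw [hintf] at hpos; exact lt_irrefl 0 hpos
  have hex_nonneg : ∃ t ∈ Set.Icc (0:ℝ) L, (0:ℝ) ≤ ⟪p + q, T t⟫ := by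
    by_contra hcon
    push_neg at hcon
    have hpos : 0 < ∫ s in (0:ℝ)..L, -(⟪p + q, T s⟫ : ℝ) :=
      intervalIntegral.intervalIntegral_pos_of_pos_on
        ((hfc.neg).intervalIntegrable 0 L)
        (fun x hx => by simpa using hcon x ⟨hx.1.le, hx.2.le⟩) hL
    rw [intervalIntegral.integral_neg, hintf] at hpos
    simp at hpos
  obtain ⟨t₁, ht₁mem, ht₁⟩ := hex_nonpos
  obtain ⟨t₂, ht₂mem, ht₂⟩ := hex_nonneg
  have hzero : ∃ t ∈ Set.uIcc t₁ t₂, (⟪p + q, T t⟫ : ℝ) = 0 := by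
    have h0mem : (0:ℝ) ∈ Set.uIcc (⟪p + q, T t₁⟫ : ℝ) ⟪p + q, T t₂⟫ :=
      Set.mem_uIcc.mpr (Or.inl ⟨ht₁, ht₂⟩)
    have := intermediate_value_uIcc (hfc.continuousOn (s := Set.uIcc t₁ t₂))
    obtain ⟨t, htmem, ht⟩ := this h0mem
    exact ⟨t, htmem, ht⟩
  obtain ⟨t, htmem, ht⟩ := hzero
  have htIcc : t ∈ Set.Icc (0:ℝ) L := by
    exact Set.uIcc_subset_Icc ht₁mem ht₂mem htmem
  have hx : (⟪q, T t⟫ : ℝ) = -⟪p, T t⟫ := by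
    have := ht
    rw [inner_add_left] at this
    linarith
  have hii : ∀ a b : ℝ, IntervalIntegrable (fun s => ‖deriv T s‖) MeasureTheory.volume a b :=
    fun a b => (hT'c.norm).intervalIntegrable a b
  rcases le_total t sm with hts | hts
  · -- t ≤ sm
    have d1 : Real.arccos ⟪T 0, T t⟫ ≤ ∫ s in (0:ℝ)..t, ‖deriv T s‖ :=
      arccos_le_integral_norm_deriv hT hnorm htIcc.1
    have d2 : Real.arccos ⟪T t, T sm⟫ ≤ ∫ s in t..sm, ‖deriv T s‖ :=
      arccos_le_integral_norm_deriv hT hnorm hts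
    have hsum : (∫ s in (0:ℝ)..t, ‖deriv T s‖) + ∫ s in t..sm, ‖deriv T s‖ = ℓ / 2 := by
      rw [intervalIntegral.integral_add_adjacent_intervals (hii 0 t) (hii t sm)]
      exact hsm
    have harc : Real.arccos ⟪T t, T sm⟫ = π - Real.arccos ⟪T 0, T t⟫ := by
      have h1 : (⟪T t, T sm⟫ : ℝ) = -⟪T 0, T t⟫ := by
        rw [real_inner_comm]; exact hx
      rw [h1, Real.arccos_neg]
    linarith
  · -- sm ≤ t
    have d1 : Real.arccos ⟪T sm, T t⟫ ≤ ∫ s in sm..t, ‖deriv T s‖ :=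
      arccos_le_integral_norm_deriv hT hnorm hts
    have d2 : Real.arccos ⟪T t, T L⟫ ≤ ∫ s in t..L, ‖deriv T s‖ :=
      arccos_le_integral_norm_deriv hT hnorm htIcc.2
    have hsum : (∫ s in sm..t, ‖deriv T s‖) + ∫ s in t..L, ‖deriv T s‖ = ℓ / 2 := by
      rw [intervalIntegral.integral_add_adjacent_intervals (hii sm t) (hii t L)]
      have h1 : (∫ s in (0:ℝ)..sm, ‖deriv T s‖) + ∫ s in sm..L, ‖deriv T s‖ = ℓ := by
        rw [intervalIntegral.integral_add_adjacent_intervals (hii 0 sm) (hii sm L)]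
      have h2 : (∫ s in (0:ℝ)..sm, ‖deriv T s‖) = ℓ / 2 := hsm
      linarith
    have harc : Real.arccos ⟪T sm, T t⟫ = π - Real.arccos ⟪T t, T L⟫ := by
      have h1 : (⟪T sm, T t⟫ : ℝ) = -⟪T t, T L⟫ := by
        rw [hper]
        have h2 : (⟪T t, T 0⟫ : ℝ) = ⟪p, T t⟫ := real_inner_comm _ _
        rw [h2]
        exact hx
      rw [h1, Real.arccos_neg]
    linarith

/-- Equality case of the elastic energy inequality: if a C² closed unit-speed curve in `Sⁿ`
achieves equality in `∫₀ᴸ (k² + a₀) ds ≥ 4π√(a₀ − 1)` (with `a₀ ≥ 2`), then its geodesic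
curvature is constant equal to `√(a₀ − 2)`. -/
theorem elastic_energy_equality_case (n : ℕ) (L : ℝ) (hL : 0 < L)
    (γ : ℝ → EuclideanSpace ℝ (Fin (n + 1)))
    (hsm : ContDiff ℝ 2 γ)
    (hclosed : ∀ s, γ (s + L) = γ s)
    (hsph : ∀ s, ‖γ s‖ = 1)
    (hunit : ∀ s, ‖deriv γ s‖ = 1)
    (k : ℝ → ℝ) (hk : ∀ s, k s = ‖deriv (deriv γ) s + γ s‖)
    (a₀ : ℝ) (ha₀ : 2 ≤ a₀)
    (heq : ∫ s in (0:ℝ)..L, (k s ^ 2 + a₀) = 4 * π * Real.sqrt (a₀ - 1)) :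
    ∀ s, k s = Real.sqrt (a₀ - 2) := by
  set T := deriv γ with hTdef
  have h21 : ContDiff ℝ (1 + 1) γ := by
    have e : ((1:WithTop ℕ∞) + 1) = 2 := by norm_num
    rw [e]; exact hsm
  have hγd : Differentiable ℝ γ := h21.differentiable (by norm_num)
  have hγc : Continuous γ := hγd.continuous
  have hTc1 : ContDiff ℝ 1 T := (contDiff_succ_iff_deriv.mp h21).2.2
  have hTd : Differentiable ℝ T := hTc1.differentiable one_ne_zero
  have hT'c : Continuous (deriv T) := (contDiff_one_iff_deriv.mp hTc1).2
  -- inner product identities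
  have horthγ : ∀ s, ⟪γ s, T s⟫ = (0:ℝ) := inner_deriv_zero_of_norm_one hγd hsph
  have hinner2 : ∀ s, ⟪deriv T s, γ s⟫ = (-1:ℝ) := by
    intro s
    have hg : (fun t => (⟪T t, γ t⟫ : ℝ)) = fun _ => (0:ℝ) := by
      funext t
      rw [real_inner_comm]; exact horthγ t
    have hgd : HasDerivAt (fun t => (⟪T t, γ t⟫ : ℝ))
        (⟪T s, deriv γ s⟫ + ⟪deriv T s, γ s⟫) s :=
      (hTd s).hasDerivAt.inner ℝ (hγd s).hasDerivAt
    rw [hg] at hgd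
    have h0 : (⟪T s, deriv γ s⟫ : ℝ) + ⟪deriv T s, γ s⟫ = 0 :=
      hgd.unique (hasDerivAt_const s 0)
    have h1 : (⟪T s, deriv γ s⟫ : ℝ) = 1 := by
      show (⟪T s, T s⟫ : ℝ) = 1
      rw [real_inner_self_eq_norm_sq, hunit]; norm_num
    linarith
  have hk2 : ∀ s, ‖deriv T s‖ ^ 2 = k s ^ 2 + 1 := by
    intro s
    have h1 : k s ^ 2 = ‖deriv T s + γ s‖ ^ 2 := by rw [hk]
    rw [norm_add_sq_real, hinner2, hsph] at h1
    nlinarith [h1]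
  -- periodicity
  have hγper : Function.Periodic γ L := hclosed
  have hTper : Function.Periodic T L := by
    intro s
    have e : (fun x => γ (x + L)) = γ := funext hclosed
    calc T (s + L) = deriv (fun x => γ (x + L)) s := (deriv_comp_add_const γ L s).symm
      _ = T s := by rw [e]
  have hT'per : Function.Periodic (deriv T) L := by
    intro s
    have e : (fun x => T (x + L)) = T := funext hTper
    calc deriv T (s + L) = deriv (fun x => T (x + L)) s := (deriv_comp_add_const T L s).symm
      _ = deriv T s := by rw [e]
  have hkper : Function.Periodic k L := by
    intro s
    rw [hk, hk, hT'per s, hclosed s]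
  -- mean zero
  have hint : (∫ s in (0:ℝ)..L, T s) = 0 := by
    have h1 : (∫ s in (0:ℝ)..L, T s) = γ L - γ 0 :=
      intervalIntegral.integral_deriv_eq_sub (fun x _ => hγd x)
        (hTc1.continuous.intervalIntegrable 0 L)
    have h2 : γ L = γ 0 := by
      have := hclosed 0
      rwa [zero_add] at this
    rw [h1, h2, sub_self]
  -- Fenchel
  set ℓ : ℝ := ∫ s in (0:ℝ)..L, ‖deriv T s‖ with hℓdef
  have hfen : 2 * π ≤ ℓ :=
    fenchel_bound hTc1 hunit hL (by simpa using hTper 0) hint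
  -- the nonnegative defect function
  set b : ℝ := Real.sqrt (a₀ - 1) with hbdef
  have hb2 : b ^ 2 = a₀ - 1 := Real.sq_sqrt (by linarith)
  have hb0 : 0 < b := Real.sqrt_pos.mpr (by linarith)
  set F : ℝ → ℝ := fun s => (‖deriv T s‖ - b) ^ 2 with hFdef
  have hFeq : ∀ s, k s ^ 2 + a₀ - 2 * b * ‖deriv T s‖ = F s := by
    intro s
    have h1 := hk2 s
    simp only [hFdef]
    nlinarith [h1, hb2]
  have kcont : Continuous k := by
    have h1 : Continuous (fun s => ‖deriv T s + γ s‖) := (hT'c.add hγc).norm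
    exact h1.congr (fun s => (hk s).symm)
  have Fcont : Continuous F := ((hT'c.norm.sub continuous_const).pow 2)
  have hFint : (∫ s in (0:ℝ)..L, F s) ≤ 0 := by
    have h1 : (∫ s in (0:ℝ)..L, F s)
        = (∫ s in (0:ℝ)..L, (k s ^ 2 + a₀)) - ∫ s in (0:ℝ)..L, 2 * b * ‖deriv T s‖ := by
      rw [← intervalIntegral.integral_sub (f := fun s => k s ^ 2 + a₀) (g := fun s => 2 * b * ‖deriv T s‖)
        (((kcont.pow 2).add continuous_const).intervalIntegrable 0 L :
          IntervalIntegrable (fun s => k s ^ 2 + a₀) MeasureTheory.volume 0 L)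
        ((continuous_const.mul hT'c.norm).intervalIntegrable 0 L :
          IntervalIntegrable (fun s => 2 * b * ‖deriv T s‖) MeasureTheory.volume 0 L)]
      congr 1
      funext s
      rw [← hFeq s]
    have h2 : (∫ s in (0:ℝ)..L, 2 * b * ‖deriv T s‖) = 2 * b * ℓ := by
      rw [hℓdef, ← intervalIntegral.integral_const_mul]
    rw [h1, h2, heq]
    nlinarith [hfen, hb0]
  -- conclude F = 0 on [0, L]
  set G : ℝ → ℝ := fun x => ∫ s in (0:ℝ)..x, F s with hGdef
  have hFnn : ∀ s, 0 ≤ F s := fun s => sq_nonneg _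
  have hGzero : ∀ x ∈ Set.Icc (0:ℝ) L, G x = 0 := by
    intro x hx
    have h1 : 0 ≤ G x := intervalIntegral.integral_nonneg hx.1 (fun s _ => hFnn s)
    have h2 : G x + (∫ s in x..L, F s) = ∫ s in (0:ℝ)..L, F s :=
      intervalIntegral.integral_add_adjacent_intervals
        (Fcont.intervalIntegrable 0 x) (Fcont.intervalIntegrable x L)
    have h3 : 0 ≤ ∫ s in x..L, F s :=
      intervalIntegral.integral_nonneg hx.2 (fun s _ => hFnn s)
    linarith
  have hFIoo : Set.EqOn F (fun _ => (0:ℝ)) (Set.Ioo 0 L) := by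
    intro y hy
    have hGd : HasDerivAt G (F y) y :=
      intervalIntegral.integral_hasDerivAt_right (Fcont.intervalIntegrable 0 y)
        (Fcont.stronglyMeasurableAtFilter _ _) Fcont.continuousAt
    have hGd0 : HasDerivAt G 0 y := by
      apply (hasDerivAt_const y (0:ℝ)).congr_of_eventuallyEq
      apply Filter.eventuallyEq_of_mem (Ioo_mem_nhds hy.1 hy.2)
      intro z hz
      exact hGzero z ⟨hz.1.le, hz.2.le⟩
    exact hGd.unique hGd0
  have hFIcc : Set.EqOn F (fun _ => (0:ℝ)) (Set.Icc 0 L) := by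
    have h1 := hFIoo.closure Fcont continuous_const
    rwa [closure_Ioo hL.ne] at h1
  -- pointwise conclusion on [0, L]
  have hkIcc : ∀ x ∈ Set.Icc (0:ℝ) L, k x = Real.sqrt (a₀ - 2) := by
    intro x hx
    have h1 : (‖deriv T x‖ - b) ^ 2 = 0 := hFIcc hx
    have h2 : ‖deriv T x‖ = b := by nlinarith [h1]
    have h3 : k x ^ 2 = a₀ - 2 := by
      have := hk2 x
      rw [h2] at this
      nlinarith [hb2]
    have h4 : 0 ≤ k x := by rw [hk]; exact norm_nonneg _
    rw [← h3, Real.sqrt_sq h4]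
  -- extend by periodicity
  intro s
  obtain ⟨t, htmem, hteq⟩ := hkper.exists_mem_Ico₀ hL s
  rw [hteq]
  exact hkIcc t ⟨htmem.1, htmem.2.le⟩
end

section
/- Let γ : ℝ → ℝ^{n+1} be a closed curve in S^n parametrized by arc length with geodesic curvature k₁, and for 0 < a ≤ 1, b = √(1−a²), define γ_a(θ) = (a·γ(θ/a), b) ∈ ℝ^{n+2}. Then γ_a is a curve in S^{n+1} parametrized by arc length, and its geodesic curvature at θ equals (1/a)·√(k₁(θ/a)² + 1 − a²) — in particular, when comparing energies, ∫ over γ_a of (geodesic curvature)² dθ = (1/a)∫ over γ of (k₁² + 1 − a²) ds. -/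
open Real intervalIntegral

noncomputable def extMap (n : ℕ) :
    EuclideanSpace ℝ (Fin (n + 1)) →L[ℝ] EuclideanSpace ℝ (Fin (n + 2)) :=
  LinearMap.toContinuousLinearMap
  { toFun := fun x => (WithLp.toLp 2 (fun i => if h : (i : ℕ) < n + 1 then x ⟨(i : ℕ), h⟩ else 0) :
      EuclideanSpace ℝ (Fin (n + 2)))
    map_add' := by
      intro x y; ext i; by_cases h : (i : ℕ) ≤ n <;>
        simp [h, PiLp.add_apply]
    map_smul' := by
      intro c x; ext i; by_cases h : (i : ℕ) ≤ n <;>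
        simp [h, PiLp.smul_apply] }

lemma extMap_apply (n : ℕ) (x : EuclideanSpace ℝ (Fin (n + 1))) (i : Fin (n + 2)) :
    extMap n x i = if h : (i : ℕ) < n + 1 then x ⟨(i : ℕ), h⟩ else 0 := rfl

lemma ext_norm_sq (n : ℕ) (x : EuclideanSpace ℝ (Fin (n + 1))) (c : ℝ)
    (v : EuclideanSpace ℝ (Fin (n + 2)))
    (hv : ∀ i : Fin (n + 2), v i = if (i : ℕ) < n + 1 then 0 else c) :
    ‖extMap n x + v‖ ^ 2 = ‖x‖ ^ 2 + c ^ 2 := by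
  rw [EuclideanSpace.norm_eq, EuclideanSpace.norm_eq,
    Real.sq_sqrt (by positivity), Real.sq_sqrt (by positivity)]
  rw [Fin.sum_univ_castSucc]
  congr 1
  · apply Finset.sum_congr rfl
    intro j _
    have hj : ((j.castSucc : Fin (n + 2)) : ℕ) < n + 1 := by
      simpa using j.isLt
    simp [PiLp.add_apply, extMap_apply, hv, hj, Fin.eta, Fin.is_le j]
  · have hlast : ¬ ((Fin.last (n + 1) : Fin (n + 2)) : ℕ) < n + 1 := by simp
    simp [PiLp.add_apply, extMap_apply, hv, hlast]

/-- Rescaling a closed unit-speed spherical curve `γ ⊂ Sⁿ` into the sphere of radius `a`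
and appending the constant `b = √(1−a²)` gives a unit-speed curve `γ_a ⊂ Sⁿ⁺¹` whose
geodesic curvature at `θ` is `(1/a)·√(k₁(θ/a)² + 1 − a²)`; consequently the curvature
energy satisfies `∫ over γ_a of k² dθ = (1/a)·∫ over γ of (k₁² + 1 − a²) ds`. -/
theorem rescaled_curve_curvature (n : ℕ) (L : ℝ) (hL : 0 < L)
    (γ : ℝ → EuclideanSpace ℝ (Fin (n + 1)))
    (hsm : ContDiff ℝ 2 γ)
    (hclosed : ∀ s, γ (s + L) = γ s)
    (hsph : ∀ s, ‖γ s‖ = 1)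
    (hunit : ∀ s, ‖deriv γ s‖ = 1)
    (k₁ : ℝ → ℝ) (hk : ∀ s, k₁ s = ‖deriv (deriv γ) s + γ s‖)
    (a b : ℝ) (ha : 0 < a) (ha1 : a ≤ 1) (hb : b = Real.sqrt (1 - a^2))
    (γa : ℝ → EuclideanSpace ℝ (Fin (n + 2)))
    (hγa : ∀ θ (i : Fin (n + 2)), γa θ i =
      if h : (i : ℕ) < n + 1 then a * γ (θ / a) ⟨(i : ℕ), h⟩ else b) :
    (∀ θ, ‖γa θ‖ = 1) ∧
    (∀ θ, ‖deriv γa θ‖ = 1) ∧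
    (∀ θ, ‖deriv (deriv γa) θ + γa θ‖ =
      (1 / a) * Real.sqrt (k₁ (θ / a) ^ 2 + 1 - a ^ 2)) ∧
    (∫ θ in (0:ℝ)..(a * L), ‖deriv (deriv γa) θ + γa θ‖ ^ 2) =
      (1 / a) * ∫ s in (0:ℝ)..L, (k₁ s ^ 2 + 1 - a ^ 2) := by
  have ha0 : a ≠ 0 := ne_of_gt ha
  have ha2 : (0:ℝ) ≤ 1 - a ^ 2 := by nlinarith
  have hb2 : b ^ 2 = 1 - a ^ 2 := by rw [hb, Real.sq_sqrt ha2]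
  -- differentiability
  have hsm' : ContDiff ℝ (1 + 1) γ := by exact_mod_cast hsm
  have hγd : Differentiable ℝ γ := hsm.differentiable (by norm_num)
  have hγ'c : ContDiff ℝ 1 (deriv γ) := (contDiff_succ_iff_deriv.mp hsm').2.2
  have hγ'd : Differentiable ℝ (deriv γ) := hγ'c.differentiable one_ne_zero
  -- the constant vector
  set v : EuclideanSpace ℝ (Fin (n + 2)) :=
    WithLp.toLp 2 (fun i => if (i : ℕ) < n + 1 then 0 else b) with hv
  have hvap : ∀ i : Fin (n + 2), v i = if (i : ℕ) < n + 1 then 0 else b := fun i => rfl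
  have hrepr : γa = fun θ => extMap n (a • γ (θ / a)) + v := by
    funext θ
    ext i
    rw [hγa]
    by_cases h : (i : ℕ) < n + 1 <;>
      simp [PiLp.add_apply, extMap_apply, hvap, h, PiLp.smul_apply, smul_eq_mul]
  -- first derivative
  have hdiv : ∀ θ : ℝ, HasDerivAt (fun t : ℝ => t / a) (1 / a) θ := by
    intro θ
    simpa using (hasDerivAt_id θ).div_const a
  have hg : ∀ θ : ℝ, HasDerivAt (fun t => a • γ (t / a)) (deriv γ (θ / a)) θ := by
    intro θ
    have h1 : HasDerivAt (fun t => γ (t / a)) ((1 / a) • deriv γ (θ / a)) θ :=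
      (hγd (θ / a)).hasDerivAt.scomp θ (hdiv θ)
    have h2 := h1.const_smul a
    rw [smul_smul, mul_one_div, div_self ha0, one_smul] at h2
    exact h2
  have hd1 : ∀ θ, HasDerivAt γa (extMap n (deriv γ (θ / a))) θ := by
    intro θ
    rw [hrepr]
    exact (((extMap n).hasFDerivAt.comp_hasDerivAt θ (hg θ)).add_const v)
  have hd1' : deriv γa = fun θ => extMap n (deriv γ (θ / a)) :=
    funext fun θ => (hd1 θ).deriv
  -- second derivative
  have hg2 : ∀ θ : ℝ, HasDerivAt (fun t => deriv γ (t / a))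
      ((1 / a) • deriv (deriv γ) (θ / a)) θ := by
    intro θ
    exact (hγ'd (θ / a)).hasDerivAt.scomp θ (hdiv θ)
  have hd2 : ∀ θ, deriv (deriv γa) θ = extMap n ((1 / a) • deriv (deriv γ) (θ / a)) := by
    intro θ
    rw [hd1']
    exact (((extMap n).hasFDerivAt.comp_hasDerivAt θ (hg2 θ))).deriv
  -- orthogonality : ⟪γ s, γ'' s⟫ = -1
  have hinner1 : ∀ s, (inner ℝ (γ s) (deriv γ s) : ℝ) = 0 := by
    intro s
    have hc : (fun t => (inner ℝ (γ t) (γ t) : ℝ)) = fun _ => (1:ℝ) := by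
      funext t
      rw [real_inner_self_eq_norm_sq, hsph t]; norm_num
    have hA : HasDerivAt (fun t => (inner ℝ (γ t) (γ t) : ℝ))
        (inner ℝ (γ s) (deriv γ s) + inner ℝ (deriv γ s) (γ s)) s :=
      HasDerivAt.inner ℝ (hγd s).hasDerivAt (hγd s).hasDerivAt
    have hB : HasDerivAt (fun t => (inner ℝ (γ t) (γ t) : ℝ)) 0 s := by
      rw [hc]; exact hasDerivAt_const s 1
    have h2 := hA.unique hB
    have h3 := real_inner_comm (γ s) (deriv γ s)
    linarith
  have hinner2 : ∀ s, (inner ℝ (γ s) (deriv (deriv γ) s) : ℝ) = -1 := by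
    intro s
    have hc : (fun t => (inner ℝ (γ t) (deriv γ t) : ℝ)) = fun _ => (0:ℝ) :=
      funext fun t => hinner1 t
    have hA : HasDerivAt (fun t => (inner ℝ (γ t) (deriv γ t) : ℝ))
        (inner ℝ (γ s) (deriv (deriv γ) s) + inner ℝ (deriv γ s) (deriv γ s)) s :=
      HasDerivAt.inner ℝ (hγd s).hasDerivAt (hγ'd s).hasDerivAt
    have hB : HasDerivAt (fun t => (inner ℝ (γ t) (deriv γ t) : ℝ)) 0 s := by
      rw [hc]; exact hasDerivAt_const s 0
    have h := hA.unique hB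
    have h2 : (inner ℝ (deriv γ s) (deriv γ s) : ℝ) = 1 := by
      rw [real_inner_self_eq_norm_sq, hunit s]; norm_num
    linarith [h, h2]
  -- part 1
  have part1 : ∀ θ, ‖γa θ‖ = 1 := by
    intro θ
    have h := ext_norm_sq n (a • γ (θ / a)) b v hvap
    rw [congrFun hrepr θ]
    have hnx : ‖a • γ (θ / a)‖ = a := by
      rw [norm_smul, hsph, Real.norm_eq_abs, abs_of_pos ha, mul_one]
    rw [hnx, hb2] at h
    have h1 : ‖extMap n (a • γ (θ / a)) + v‖ ^ 2 = 1 := by rw [h]; ring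
    nlinarith [norm_nonneg (extMap n (a • γ (θ / a)) + v)]
  -- part 2
  have part2 : ∀ θ, ‖deriv γa θ‖ = 1 := by
    intro θ
    rw [hd1']
    have h := ext_norm_sq n (deriv γ (θ / a)) 0
      (0 : EuclideanSpace ℝ (Fin (n + 2))) (by intro i; by_cases h : (i:ℕ) < n+1 <;> simp [h])
    rw [add_zero] at h
    rw [hunit] at h
    have h2 : ‖extMap n (deriv γ (θ / a))‖ ^ 2 = 1 := by rw [h]; ring
    nlinarith [norm_nonneg (extMap n (deriv γ (θ / a)))]
  -- part 3
  have hknn : ∀ s, (0:ℝ) ≤ k₁ s ^ 2 + 1 - a ^ 2 := by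
    intro s; nlinarith [sq_nonneg (k₁ s)]
  have part3 : ∀ θ, ‖deriv (deriv γa) θ + γa θ‖ =
      (1 / a) * Real.sqrt (k₁ (θ / a) ^ 2 + 1 - a ^ 2) := by
    intro θ
    set s := θ / a with hs
    set X := deriv (deriv γ) s + γ s with hX
    have hXγ : (inner ℝ X (γ s) : ℝ) = 0 := by
      have h1 : (inner ℝ (deriv (deriv γ) s) (γ s) : ℝ) = -1 :=
        (real_inner_comm (γ s) (deriv (deriv γ) s)) ▸ hinner2 s
      have h2 : (inner ℝ (γ s) (γ s) : ℝ) = 1 := by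
        rw [real_inner_self_eq_norm_sq, hsph]; norm_num
      rw [hX, inner_add_left, h1, h2]; norm_num
    have hrw : deriv (deriv γa) θ + γa θ =
        extMap n ((1 / a) • X + (a - 1 / a) • γ s) + v := by
      rw [hd2, hrepr]
      simp only [← hs]
      rw [← add_assoc, ← map_add]
      congr 1
      have hcoef : (1 / a) + (a - 1 / a) = a := by ring
      rw [hX, smul_add, add_assoc, ← add_smul, hcoef]
    rw [hrw]
    have hnorm2 : ‖(1 / a) • X + (a - 1 / a) • γ s‖ ^ 2 =
        (1 / a) ^ 2 * k₁ s ^ 2 + (a - 1 / a) ^ 2 := by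
      rw [norm_add_sq_real, real_inner_smul_left, real_inner_smul_right, hXγ,
        norm_smul, norm_smul, hsph, hk, Real.norm_eq_abs, Real.norm_eq_abs]
      rw [mul_pow, mul_pow, sq_abs, sq_abs]
      ring
    have hsq := ext_norm_sq n ((1 / a) • X + (a - 1 / a) • γ s) b v hvap
    rw [hnorm2, hb2] at hsq
    have hval : ‖extMap n ((1 / a) • X + (a - 1 / a) • γ s) + v‖ ^ 2 =
        ((1 / a) * Real.sqrt (k₁ s ^ 2 + 1 - a ^ 2)) ^ 2 := by
      rw [hsq, mul_pow, Real.sq_sqrt (hknn s)]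
      field_simp
      ring
    have hrhs : (0:ℝ) ≤ (1 / a) * Real.sqrt (k₁ s ^ 2 + 1 - a ^ 2) := by positivity
    calc ‖extMap n ((1 / a) • X + (a - 1 / a) • γ s) + v‖
        = Real.sqrt (‖extMap n ((1 / a) • X + (a - 1 / a) • γ s) + v‖ ^ 2) :=
          (Real.sqrt_sq (norm_nonneg _)).symm
      _ = (1 / a) * Real.sqrt (k₁ s ^ 2 + 1 - a ^ 2) := by
          rw [hval, Real.sqrt_sq hrhs]
  refine ⟨part1, part2, part3, ?_⟩
  -- part 4
  have hcongr : (∫ θ in (0:ℝ)..(a * L), ‖deriv (deriv γa) θ + γa θ‖ ^ 2) =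
      ∫ θ in (0:ℝ)..(a * L), (1 / a) ^ 2 * (k₁ (θ / a) ^ 2 + 1 - a ^ 2) := by
    apply intervalIntegral.integral_congr
    intro θ _
    dsimp only
    rw [part3 θ, mul_pow, Real.sq_sqrt (hknn _)]
  rw [hcongr, intervalIntegral.integral_const_mul,
    intervalIntegral.integral_comp_div (fun s => k₁ s ^ 2 + 1 - a ^ 2) ha0]
  rw [zero_div, mul_comm a L, mul_div_assoc, div_self ha0, mul_one, smul_eq_mul]
  field_simp
end

section
/- Let γ, γ̂ be closed unit-speed curves in spheres with lengths L, L̂ and geodesic curvatures k₁, k̂₁. Then W = (1/4)·∫₀^{L̂}∫₀^{L}(4 + k₁² + k̂₁²) ds dŝ > 2π². -/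
open Real MeasureTheory Set intervalIntegral Complex AddCircle ContinuousMap


section Helpers
variable {T : ℝ} [hT : Fact (0 < T)]

lemma summable_sq_fourierCoeff (h : C(AddCircle T, ℂ)) :
    Summable (fun n : ℤ => ‖fourierCoeff (⇑h) n‖ ^ 2) := by
  set F := toLp (E := ℂ) 2 haarAddCircle ℂ h with hF
  have h1 : Summable (fun n : ℤ => ‖fourierBasis.repr F n‖ ^ (ENNReal.toReal 2)) :=
    (fourierBasis.repr F).property.summable (by norm_num)
  refine (summable_congr fun n => ?_).mp h1
  rw [fourierBasis_repr, fourierCoeff_toLp]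
  rw [show ENNReal.toReal 2 = ((2:ℕ):ℝ) by norm_num, Real.rpow_natCast]

lemma parseval_cont (h : C(AddCircle T, ℂ)) :
    ∑' n : ℤ, ‖fourierCoeff (⇑h) n‖ ^ 2 = ∫ t : AddCircle T, ‖h t‖ ^ 2 ∂haarAddCircle := by
  have := tsum_sq_fourierCoeff (toLp (E := ℂ) 2 haarAddCircle ℂ h)
  simp_rw [fourierCoeff_toLp] at this
  rw [this]
  apply MeasureTheory.integral_congr_ae
  filter_upwards [coeFn_toLp (p := 2) haarAddCircle h (𝕜 := ℂ)] with t ht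
  rw [ht]

lemma haar_integral_eq (f : AddCircle T → ℝ) :
    ∫ t, f t ∂haarAddCircle = (1 / T) * ∫ x in (0:ℝ)..T, f (x : AddCircle T) := by
  have h1 : ∫ x in (0:ℝ)..(0 + T), f (x : AddCircle T) = ∫ b : AddCircle T, f b :=
    AddCircle.intervalIntegral_preimage T 0 f
  rw [zero_add] at h1
  rw [h1, volume_eq_smul_haarAddCircle, MeasureTheory.integral_smul_measure,
    ENNReal.toReal_ofReal hT.out.le, smul_eq_mul, ← mul_assoc]
  rw [one_div, inv_mul_cancel₀ hT.out.ne', one_mul]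

lemma liftIco_ae_eq (f : ℝ → ℂ) (F : ℝ → ℝ)
    (h : ∀ x, F x = ‖f x‖ ^ 2) :
    ∫ x in (0:ℝ)..T, ‖AddCircle.liftIco T 0 f (x : AddCircle T)‖ ^ 2
      = ∫ x in (0:ℝ)..T, F x := by
  apply intervalIntegral.integral_congr_ae
  have hne : ∀ᵐ x : ℝ, x ≠ T := by
    rw [MeasureTheory.ae_iff]
    simp [Real.volume_singleton]
  filter_upwards [hne] with x hx hmem
  rw [uIoc_of_le hT.out.le] at hmem
  have : x ∈ Ico (0:ℝ) T := ⟨hmem.1.le, lt_of_le_of_ne hmem.2 hx⟩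
  rw [AddCircle.liftIco_zero_coe_apply this, h x]

end Helpers

lemma wirtinger_complex {T : ℝ} (hT : 0 < T) (g g' : ℝ → ℂ)
    (hderiv : ∀ x, HasDerivAt g (g' x) x) (hg'c : Continuous g')
    (hper : g T = g 0) (hper' : g' T = g' 0)
    (hmean : ∫ x in (0:ℝ)..T, g x = 0) :
    4 * π ^ 2 / T ^ 2 * ∫ x in (0:ℝ)..T, ‖g x‖ ^ 2 ≤ ∫ x in (0:ℝ)..T, ‖g' x‖ ^ 2 := by
  haveI : Fact (0 < T) := ⟨hT⟩
  have hgc : Continuous g := by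
    apply continuous_iff_continuousAt.mpr
    exact fun x => (hderiv x).continuousAt
  set hab : (0:ℝ) < 0 + T := lt_add_of_pos_right 0 hT with hhab
  set G : C(AddCircle T, ℂ) :=
    ⟨AddCircle.liftIco T 0 g,
      AddCircle.liftIco_zero_continuous (by rw [hper]) hgc.continuousOn⟩ with hG
  set G' : C(AddCircle T, ℂ) :=
    ⟨AddCircle.liftIco T 0 g',
      AddCircle.liftIco_zero_continuous (by rw [hper']) hg'c.continuousOn⟩ with hG'
  set c : ℤ → ℂ := fun n => fourierCoeff (⇑G) n with hc
  set c' : ℤ → ℂ := fun n => fourierCoeff (⇑G') n with hc'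
  -- relation between c and fourierCoeffOn
  have hcOn : ∀ n, c n = fourierCoeffOn hab g n := fun n => fourierCoeff_liftIco_eq g n
  have hcOn' : ∀ n, c' n = fourierCoeffOn hab g' n := fun n => fourierCoeff_liftIco_eq g' n
  -- mean-zero: c 0 = 0
  have hc0 : c 0 = 0 := by
    rw [hcOn 0, fourierCoeffOn_eq_integral]
    simp only [neg_zero, fourier_zero, one_smul, zero_add]
    rw [hmean, smul_zero]
  -- derivative relation
  have hrel : ∀ n : ℤ, n ≠ 0 → (↑T : ℂ) * c' n = (2 * ↑π * I * n) * c n := by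
    intro n hn
    have e := fourierCoeffOn_of_hasDerivAt hab hn (fun x _ => hderiv x)
      (hg'c.intervalIntegrable 0 (0 + T))
    rw [show g (0 + T) - g 0 = 0 by rw [zero_add, hper, sub_self]] at e
    rw [mul_zero, zero_sub, ← hcOn, ← hcOn'] at e
    have hpi : (π : ℂ) ≠ 0 := ofReal_ne_zero.mpr Real.pi_ne_zero
    have hnC : (n : ℂ) ≠ 0 := Int.cast_ne_zero.mpr hn
    have hIne : (-2 * ↑π * I * ↑n : ℂ) ≠ 0 := by
      simp [I_ne_zero, hpi, hnC, Complex.ext_iff]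
    field_simp at e
    push_cast at e ⊢
    linear_combination -e
  -- per-term inequality
  have hterm : ∀ n : ℤ, 4 * π ^ 2 / T ^ 2 * ‖c n‖ ^ 2 ≤ ‖c' n‖ ^ 2 := by
    intro n
    rcases eq_or_ne n 0 with rfl | hn
    · rw [hc0]
      simpa using by positivity
    · have h := congrArg norm (hrel n hn)
      rw [norm_mul, norm_mul] at h
      have h1 : ‖(T:ℂ)‖ = T := by
        rw [Complex.norm_real, Real.norm_of_nonneg hT.le]
      have h2 : ‖(2 * ↑π * I * n : ℂ)‖ = 2 * π * |(n:ℝ)| := by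
        simp [norm_mul, Complex.norm_real, abs_of_pos Real.pi_pos]
      rw [h1, h2] at h
      have hn1 : (1:ℝ) ≤ |(n:ℝ)| := by
        rw [← Int.cast_abs]
        exact_mod_cast Int.one_le_abs hn
      have hcn : (0:ℝ) ≤ ‖c n‖ := norm_nonneg _
      have hqn : (0:ℝ) ≤ ‖c' n‖ := norm_nonneg _
      rw [div_mul_eq_mul_div, div_le_iff₀ (by positivity)]
      have hsq : (T * ‖c' n‖) ^ 2 = (2 * π * |(n:ℝ)| * ‖c n‖) ^ 2 := by rw [h]
      nlinarith [hsq, mul_nonneg (mul_nonneg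
        (by positivity : (0:ℝ) ≤ 4 * π ^ 2 * ‖c n‖ ^ 2)
        (sub_nonneg.mpr hn1)) (by positivity : (0:ℝ) ≤ |(n:ℝ)| + 1)]
  have hsum : Summable (fun n : ℤ => ‖c n‖ ^ 2) := summable_sq_fourierCoeff G
  have hsum' : Summable (fun n : ℤ => ‖c' n‖ ^ 2) := summable_sq_fourierCoeff G'
  have hP : ∑' n : ℤ, ‖c n‖ ^ 2 = (1 / T) * ∫ x in (0:ℝ)..T, ‖g x‖ ^ 2 := by
    rw [hc, parseval_cont G, haar_integral_eq (fun t => ‖G t‖ ^ 2)]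
    congr 1
    exact liftIco_ae_eq g _ (fun x => rfl)
  have hP' : ∑' n : ℤ, ‖c' n‖ ^ 2 = (1 / T) * ∫ x in (0:ℝ)..T, ‖g' x‖ ^ 2 := by
    rw [hc', parseval_cont G', haar_integral_eq (fun t => ‖G' t‖ ^ 2)]
    congr 1
    exact liftIco_ae_eq g' _ (fun x => rfl)
  have hle : (4 * π ^ 2 / T ^ 2) * ∑' n : ℤ, ‖c n‖ ^ 2 ≤ ∑' n : ℤ, ‖c' n‖ ^ 2 := by
    rw [← tsum_mul_left]
    exact Summable.tsum_le_tsum hterm (hsum.mul_left _) hsum'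
  rw [hP, hP'] at hle
  set A := ∫ x in (0:ℝ)..T, ‖g x‖ ^ 2 with hA
  set B := ∫ x in (0:ℝ)..T, ‖g' x‖ ^ 2 with hB
  have h3 := mul_le_mul_of_nonneg_left hle hT.le
  rw [show T * (4 * π ^ 2 / T ^ 2 * (1 / T * A)) = 4 * π ^ 2 / T ^ 2 * A by
      field_simp,
    show T * (1 / T * B) = B by field_simp] at h3
  exact h3

lemma wirtinger_real {T : ℝ} (hT : 0 < T) (g g' : ℝ → ℝ)
    (hderiv : ∀ x, HasDerivAt g (g' x) x) (hg'c : Continuous g')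
    (hper : g T = g 0) (hper' : g' T = g' 0)
    (hmean : ∫ x in (0:ℝ)..T, g x = 0) :
    4 * π ^ 2 / T ^ 2 * ∫ x in (0:ℝ)..T, g x ^ 2 ≤ ∫ x in (0:ℝ)..T, g' x ^ 2 := by
  have := wirtinger_complex hT (fun x => (g x : ℂ)) (fun x => (g' x : ℂ))
    (fun x => (hderiv x).ofReal_comp) (Complex.continuous_ofReal.comp hg'c)
    (by simp [hper]) (by simp [hper'])
    (by rw [intervalIntegral.integral_ofReal, hmean, Complex.ofReal_zero])
  simpa [Complex.norm_real, Real.norm_eq_abs, _root_.sq_abs] using this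

lemma curve_energy {N : ℕ} {L : ℝ} (hL : 0 < L) (γ : ℝ → EuclideanSpace ℝ (Fin N))
    (hsm : ContDiff ℝ 2 γ) (hper : ∀ s, γ (s + L) = γ s)
    (hunit : ∀ s, ‖deriv γ s‖ = 1) :
    4 * π ^ 2 / L ≤ ∫ s in (0:ℝ)..L, ‖deriv (deriv γ) s‖ ^ 2 := by
  have hd1 : Differentiable ℝ γ := hsm.differentiable (by norm_num)
  have h2 : ContDiff ℝ (1 + 1 : ℕ) γ := by norm_num; exact hsm
  have hcd1 : ContDiff ℝ 1 (deriv γ) := by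
    have h2' : ContDiff ℝ ((1 : ℕ) + 1) γ := by exact_mod_cast h2
    exact (contDiff_succ_iff_deriv.mp h2').2.2
  have hd2 : Differentiable ℝ (deriv γ) := (contDiff_one_iff_deriv.mp hcd1).1
  have hc2 : Continuous (deriv (deriv γ)) := (contDiff_one_iff_deriv.mp hcd1).2
  have hc1 : Continuous (deriv γ) := hd2.continuous
  -- periodicity of derivatives
  have hfun : ∀ (f : ℝ → EuclideanSpace ℝ (Fin N)), (∀ s, f (s + L) = f s) →
      ∀ s, deriv f (s + L) = deriv f s := by
    intro f hf s
    rw [← deriv_comp_add_const f L s, funext fun x => hf x]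
  have hper1 : ∀ s, deriv γ (s + L) = deriv γ s := hfun γ hper
  have hper2 : ∀ s, deriv (deriv γ) (s + L) = deriv (deriv γ) s := hfun (deriv γ) hper1
  -- mean zero
  have hii : IntervalIntegrable (deriv γ) volume 0 L := hc1.intervalIntegrable 0 L
  have hmean : ∫ s in (0:ℝ)..L, deriv γ s = 0 := by
    rw [intervalIntegral.integral_deriv_eq_sub (fun x _ => hd1 x) hii]
    rw [show γ L = γ 0 by simpa using hper 0, sub_self]
  -- coordinates
  set P : Fin N → (EuclideanSpace ℝ (Fin N) →L[ℝ] ℝ) := fun i => EuclideanSpace.proj i with hP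
  have hgderiv : ∀ i s, HasDerivAt (fun x => deriv γ x i) (deriv (deriv γ) s i) s := by
    intro i s
    exact (P i).hasFDerivAt.comp_hasDerivAt s (hd2 s).hasDerivAt
  have hgmean : ∀ i, ∫ s in (0:ℝ)..L, deriv γ s i = 0 := by
    intro i
    have := ((P i).intervalIntegral_comp_comm hii)
    rw [hmean] at this
    simpa [hP] using this
  have hwir : ∀ i, 4 * π ^ 2 / L ^ 2 * ∫ s in (0:ℝ)..L, (deriv γ s i) ^ 2
      ≤ ∫ s in (0:ℝ)..L, (deriv (deriv γ) s i) ^ 2 := by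
    intro i
    refine wirtinger_real hL _ _ (hgderiv i)
      ((EuclideanSpace.proj i (𝕜 := ℝ)).continuous.comp hc2) ?_ ?_ (hgmean i)
    · simpa using congrArg (fun v => v i) (hper1 0)
    · simpa using congrArg (fun v => v i) (hper2 0)
  -- norms as sums
  have hnorm : ∀ (w : EuclideanSpace ℝ (Fin N)), ‖w‖ ^ 2 = ∑ i, w i ^ 2 := by
    intro w
    rw [EuclideanSpace.norm_eq, Real.sq_sqrt (by positivity)]
    simp [Real.norm_eq_abs, _root_.sq_abs]
  have hsplit : ∀ (v : ℝ → EuclideanSpace ℝ (Fin N)), Continuous v →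
      ∫ s in (0:ℝ)..L, ‖v s‖ ^ 2 = ∑ i, ∫ s in (0:ℝ)..L, (v s i) ^ 2 := by
    intro v hv
    rw [← intervalIntegral.integral_finset_sum]
    · exact intervalIntegral.integral_congr fun s _ => hnorm (v s)
    · intro i _
      exact (((EuclideanSpace.proj i (𝕜 := ℝ)).continuous.comp hv).pow 2).intervalIntegrable 0 L
  have hE1 : ∫ s in (0:ℝ)..L, ‖deriv γ s‖ ^ 2 = L := by
    rw [intervalIntegral.integral_congr (g := fun _ => (1:ℝ)) fun s _ => by rw [hunit s]; norm_num]
    simp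
  calc 4 * π ^ 2 / L = 4 * π ^ 2 / L ^ 2 * L := by field_simp
    _ = 4 * π ^ 2 / L ^ 2 * ∫ s in (0:ℝ)..L, ‖deriv γ s‖ ^ 2 := by rw [hE1]
    _ = ∑ i, 4 * π ^ 2 / L ^ 2 * ∫ s in (0:ℝ)..L, (deriv γ s i) ^ 2 := by
        rw [hsplit _ hc1, Finset.mul_sum]
    _ ≤ ∑ i, ∫ s in (0:ℝ)..L, (deriv (deriv γ) s i) ^ 2 :=
        Finset.sum_le_sum fun i _ => hwir i
    _ = ∫ s in (0:ℝ)..L, ‖deriv (deriv γ) s‖ ^ 2 := (hsplit _ hc2).symm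

lemma sq_curv {N : ℕ} (γ : ℝ → EuclideanSpace ℝ (Fin N)) (hsm : ContDiff ℝ 2 γ)
    (hsph : ∀ s, ‖γ s‖ = 1) (hunit : ∀ s, ‖deriv γ s‖ = 1) (s : ℝ) :
    ‖deriv (deriv γ) s + γ s‖ ^ 2 = ‖deriv (deriv γ) s‖ ^ 2 - 1 := by
  have hd1 : Differentiable ℝ γ := hsm.differentiable (by norm_num)
  have h2 : ContDiff ℝ ((1:ℕ) + 1) γ := by exact_mod_cast hsm
  have hcd1 : ContDiff ℝ 1 (deriv γ) := (contDiff_succ_iff_deriv.mp h2).2.2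
  have hd2 : Differentiable ℝ (deriv γ) := (contDiff_one_iff_deriv.mp hcd1).1
  have h1 : ∀ t, inner ℝ (deriv γ t) (γ t) = (0:ℝ) := by
    intro t
    have hf : HasDerivAt (fun x => (inner ℝ (γ x) (γ x) : ℝ))
        (inner ℝ (γ t) (deriv γ t) + inner ℝ (deriv γ t) (γ t)) t :=
      HasDerivAt.inner ℝ (hd1 t).hasDerivAt (hd1 t).hasDerivAt
    have hconst : (fun x => (inner ℝ (γ x) (γ x) : ℝ)) = fun _ => (1:ℝ) := by
      funext x
      rw [real_inner_self_eq_norm_sq, hsph x]; norm_num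
    have h0 : HasDerivAt (fun x => (inner ℝ (γ x) (γ x) : ℝ)) 0 t := by
      rw [hconst]; exact hasDerivAt_const t 1
    have huniq := hf.unique h0
    have hsymm : inner ℝ (γ t) (deriv γ t) = (inner ℝ (deriv γ t) (γ t) : ℝ) :=
      real_inner_comm _ _
    rw [hsymm] at huniq; linarith
  have h2' : inner ℝ (deriv (deriv γ) s) (γ s) = (-1:ℝ) := by
    have hf : HasDerivAt (fun x => (inner ℝ (deriv γ x) (γ x) : ℝ))
        (inner ℝ (deriv γ s) (deriv γ s) + inner ℝ (deriv (deriv γ) s) (γ s)) s :=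
      HasDerivAt.inner ℝ (hd2 s).hasDerivAt (hd1 s).hasDerivAt
    have hconst : (fun x => (inner ℝ (deriv γ x) (γ x) : ℝ)) = fun _ => (0:ℝ) := funext h1
    have h0 : HasDerivAt (fun x => (inner ℝ (deriv γ x) (γ x) : ℝ)) 0 s := by
      rw [hconst]; exact hasDerivAt_const s 0
    have huniq := hf.unique h0
    have hsq : inner ℝ (deriv γ s) (deriv γ s) = (1:ℝ) := by
      rw [real_inner_self_eq_norm_sq, hunit]; norm_num
    linarith
  rw [norm_add_sq_real, h2', hsph s]
  ring

lemma curve_bound {N : ℕ} {L : ℝ} (hL : 0 < L) (γ : ℝ → EuclideanSpace ℝ (Fin N))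
    (hsm : ContDiff ℝ 2 γ) (hclosed : ∀ s, γ (s + L) = γ s)
    (hsph : ∀ s, ‖γ s‖ = 1) (hunit : ∀ s, ‖deriv γ s‖ = 1)
    (k₁ : ℝ → ℝ) (hk : ∀ s, k₁ s = ‖deriv (deriv γ) s + γ s‖) :
    (Continuous fun s => k₁ s ^ 2) ∧
      4 * π ^ 2 - L ^ 2 ≤ L * ∫ s in (0:ℝ)..L, k₁ s ^ 2 := by
  have h2 : ContDiff ℝ ((1:ℕ) + 1) γ := by exact_mod_cast hsm
  have hcd1 : ContDiff ℝ 1 (deriv γ) := (contDiff_succ_iff_deriv.mp h2).2.2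
  have hc2 : Continuous (deriv (deriv γ)) := (contDiff_one_iff_deriv.mp hcd1).2
  have hkeq : k₁ = fun s => ‖deriv (deriv γ) s + γ s‖ := funext hk
  have hkc : Continuous fun s => k₁ s ^ 2 := by
    rw [hkeq]
    exact ((hc2.add hsm.continuous).norm.pow 2)
  refine ⟨hkc, ?_⟩
  have hIc : Continuous fun s => ‖deriv (deriv γ) s‖ ^ 2 := (hc2.norm.pow 2)
  have hA : ∫ s in (0:ℝ)..L, k₁ s ^ 2
      = (∫ s in (0:ℝ)..L, ‖deriv (deriv γ) s‖ ^ 2) - L := by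
    have : ∀ s ∈ uIcc (0:ℝ) L, k₁ s ^ 2 = ‖deriv (deriv γ) s‖ ^ 2 - 1 := by
      intro s _
      rw [hk s]
      exact sq_curv γ hsm hsph hunit s
    rw [intervalIntegral.integral_congr this,
      intervalIntegral.integral_sub (hIc.intervalIntegrable 0 L) intervalIntegrable_const,
      intervalIntegral.integral_const]
    simp
  have hI := curve_energy hL γ hsm hclosed hunit
  rw [hA, mul_sub]
  have := mul_le_mul_of_nonneg_left hI hL.le
  rw [mul_div_cancel₀ _ hL.ne'] at this
  nlinarith


open Real intervalIntegral

/-- Every tensor-product torus has Willmore functional exceeding `2π²`: for closed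
unit-speed curves `γ ⊂ Sⁿ`, `γ̂ ⊂ Sᵐ` with lengths `L, L̂` and geodesic curvatures
`k₁, k̂₁`, one has `(1/4)∫₀^{L̂}∫₀^{L}(4 + k₁² + k̂₁²) ds dŝ > 2π²`. -/
theorem willmore_tensor_gt (n m : ℕ) (L Lh : ℝ) (hL : 0 < L) (hLh : 0 < Lh)
    (γ : ℝ → EuclideanSpace ℝ (Fin (n + 1)))
    (γh : ℝ → EuclideanSpace ℝ (Fin (m + 1)))
    (hsm : ContDiff ℝ 2 γ) (hsmh : ContDiff ℝ 2 γh)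
    (hclosed : ∀ s, γ (s + L) = γ s) (hclosedh : ∀ t, γh (t + Lh) = γh t)
    (hsph : ∀ s, ‖γ s‖ = 1) (hsphh : ∀ t, ‖γh t‖ = 1)
    (hunit : ∀ s, ‖deriv γ s‖ = 1) (hunith : ∀ t, ‖deriv γh t‖ = 1)
    (k₁ kh₁ : ℝ → ℝ)
    (hk : ∀ s, k₁ s = ‖deriv (deriv γ) s + γ s‖)
    (hkh : ∀ t, kh₁ t = ‖deriv (deriv γh) t + γh t‖) :
    2 * π ^ 2 <
      (1/4) * ∫ t in (0:ℝ)..Lh, ∫ s in (0:ℝ)..L, (4 + k₁ s ^ 2 + kh₁ t ^ 2) := by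
  obtain ⟨hkc, hbound⟩ := curve_bound hL γ hsm hclosed hsph hunit k₁ hk
  obtain ⟨hkch, hboundh⟩ := curve_bound hLh γh hsmh hclosedh hsphh hunith kh₁ hkh
  set A := ∫ s in (0:ℝ)..L, k₁ s ^ 2 with hAdef
  set Ah := ∫ t in (0:ℝ)..Lh, kh₁ t ^ 2 with hAhdef
  have hinner : ∀ t : ℝ, (∫ s in (0:ℝ)..L, (4 + k₁ s ^ 2 + kh₁ t ^ 2))
      = (A + 4 * L) + L * kh₁ t ^ 2 := by
    intro t
    have : (fun s => 4 + k₁ s ^ 2 + kh₁ t ^ 2)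
        = fun s => k₁ s ^ 2 + (4 + kh₁ t ^ 2) := funext fun s => by ring
    rw [this, intervalIntegral.integral_add (hkc.intervalIntegrable 0 L)
      intervalIntegrable_const, intervalIntegral.integral_const]
    simp only [smul_eq_mul, sub_zero]
    ring
  have houter : (∫ t in (0:ℝ)..Lh, ∫ s in (0:ℝ)..L, (4 + k₁ s ^ 2 + kh₁ t ^ 2))
      = (A + 4 * L) * Lh + L * Ah := by
    rw [intervalIntegral.integral_congr (g := fun t => (A + 4 * L) + L * kh₁ t ^ 2)
      fun t _ => hinner t]
    rw [intervalIntegral.integral_add intervalIntegrable_const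
      ((hkch.intervalIntegrable 0 Lh).const_mul L),
      intervalIntegral.integral_const, intervalIntegral.integral_const_mul]
    simp only [smul_eq_mul, sub_zero]
    ring
  rw [houter]
  have hAnn : 0 ≤ A := by
    rw [hAdef]
    apply intervalIntegral.integral_nonneg hL.le
    intro s _; positivity
  have hAhnn : 0 ≤ Ah := by
    rw [hAhdef]
    apply intervalIntegral.integral_nonneg hLh.le
    intro t _; positivity
  have hpi := Real.pi_pos
  nlinarith [mul_pos hL hLh, sq_nonneg (L - Lh), sq_nonneg (L * Lh), sq_nonneg (L + Lh),
    mul_le_mul_of_nonneg_left hbound (sq_nonneg Lh),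
    mul_le_mul_of_nonneg_left hboundh (sq_nonneg L),
    mul_pos (mul_pos hL hLh) (mul_pos hL hLh),
    mul_nonneg (mul_nonneg hL.le hLh.le) hAnn,
    mul_nonneg (mul_nonneg hL.le hLh.le) hAhnn]
end

section
/- Let λ ∈ ℝ, a,b > 0 with a² + b² = 1, and define γ(s) = (a cos(s/c), a sin(s/c), b cos(λs/c), b sin(λs/c)) with c = √(a² + b²λ²). Then γ is a unit-speed curve in S³, its geodesic curvature k₁ satisfies k₁² = a²b²(λ² − 1)²/(a² + b²λ²)², and (when k₁ ≠ 0) its torsion k₂ satisfies k₂² = λ²/(a² + b²λ²)². -/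
set_option maxHeartbeats 1000000
open Real

noncomputable def shA (c lam p q : ℝ) : ℝ → EuclideanSpace ℝ (Fin 4) := fun s =>
  (WithLp.equiv 2 (Fin 4 → ℝ)).symm
    ![p * Real.cos (s/c), p * Real.sin (s/c),
      q * Real.cos (lam * s / c), q * Real.sin (lam * s / c)]

noncomputable def shB (c lam p q : ℝ) : ℝ → EuclideanSpace ℝ (Fin 4) := fun s =>
  (WithLp.equiv 2 (Fin 4 → ℝ)).symm
    ![-(p * Real.sin (s/c)), p * Real.cos (s/c),
      -(q * Real.sin (lam * s / c)), q * Real.cos (lam * s / c)]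

lemma hd_div (c s : ℝ) : HasDerivAt (fun s : ℝ => s / c) (1/c) s := by
  simpa using (hasDerivAt_id s).div_const c

lemma hd_div2 (lam c s : ℝ) : HasDerivAt (fun s : ℝ => lam * s / c) (lam/c) s := by
  simpa using ((hasDerivAt_id s).const_mul lam).div_const c

lemma hasDerivAt_shA (c lam p q : ℝ) (s : ℝ) :
    HasDerivAt (shA c lam p q) (shB c lam (p/c) (lam*q/c) s) s := by
  have hF : HasDerivAt
      (fun s : ℝ => (![p * Real.cos (s/c), p * Real.sin (s/c),
        q * Real.cos (lam * s / c), q * Real.sin (lam * s / c)] : Fin 4 → ℝ))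
      ![-(p/c * Real.sin (s/c)), p/c * Real.cos (s/c),
        -(lam*q/c * Real.sin (lam * s / c)), lam*q/c * Real.cos (lam * s / c)] s := by
    rw [hasDerivAt_pi]
    intro i
    fin_cases i
    · have := ((Real.hasDerivAt_cos (s/c)).comp s (hd_div c s)).const_mul p
      convert this using 1 <;> (try rfl) <;> simp [Function.comp_def, Pi.neg_def] <;> ring
    · have := ((Real.hasDerivAt_sin (s/c)).comp s (hd_div c s)).const_mul p
      convert this using 1 <;> (try rfl) <;> simp [Function.comp_def, Pi.neg_def] <;> ring
    · have := ((Real.hasDerivAt_cos (lam*s/c)).comp s (hd_div2 lam c s)).const_mul q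
      convert this using 1 <;> (try rfl) <;> simp [Function.comp_def, Pi.neg_def] <;> ring
    · have := ((Real.hasDerivAt_sin (lam*s/c)).comp s (hd_div2 lam c s)).const_mul q
      convert this using 1 <;> (try rfl) <;> simp [Function.comp_def, Pi.neg_def] <;> ring
  exact ((PiLp.continuousLinearEquiv 2 ℝ (fun _ : Fin 4 => ℝ)).symm.hasFDerivAt).comp_hasDerivAt s hF

lemma hasDerivAt_shB (c lam p q : ℝ) (s : ℝ) :
    HasDerivAt (shB c lam p q) (shA c lam (-(p/c)) (-(lam*q/c)) s) s := by
  have hF : HasDerivAt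
      (fun s : ℝ => (![-(p * Real.sin (s/c)), p * Real.cos (s/c),
        -(q * Real.sin (lam * s / c)), q * Real.cos (lam * s / c)] : Fin 4 → ℝ))
      ![-(p/c) * Real.cos (s/c), -(p/c) * Real.sin (s/c),
        -(lam*q/c) * Real.cos (lam * s / c), -(lam*q/c) * Real.sin (lam * s / c)] s := by
    rw [hasDerivAt_pi]
    intro i
    fin_cases i
    · have := (((Real.hasDerivAt_sin (s/c)).comp s (hd_div c s)).const_mul p).neg
      convert this using 1 <;> (try rfl) <;> simp [Function.comp_def, Pi.neg_def] <;> ring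
    · have := ((Real.hasDerivAt_cos (s/c)).comp s (hd_div c s)).const_mul p
      convert this using 1 <;> (try rfl) <;> simp [Function.comp_def, Pi.neg_def] <;> ring
    · have := (((Real.hasDerivAt_sin (lam*s/c)).comp s (hd_div2 lam c s)).const_mul q).neg
      convert this using 1 <;> (try rfl) <;> simp [Function.comp_def, Pi.neg_def] <;> ring
    · have := ((Real.hasDerivAt_cos (lam*s/c)).comp s (hd_div2 lam c s)).const_mul q
      convert this using 1 <;> (try rfl) <;> simp [Function.comp_def, Pi.neg_def] <;> ring
  exact ((PiLp.continuousLinearEquiv 2 ℝ (fun _ : Fin 4 => ℝ)).symm.hasFDerivAt).comp_hasDerivAt s hF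

lemma deriv_shA (c lam p q : ℝ) :
    deriv (shA c lam p q) = fun s => shB c lam (p/c) (lam*q/c) s := by
  funext s; exact (hasDerivAt_shA c lam p q s).deriv

lemma deriv_shB (c lam p q : ℝ) :
    deriv (shB c lam p q) = fun s => shA c lam (-(p/c)) (-(lam*q/c)) s := by
  funext s; exact (hasDerivAt_shB c lam p q s).deriv

lemma norm_shA (c lam p q s : ℝ) : ‖shA c lam p q s‖ = Real.sqrt (p^2 + q^2) := by
  rw [shA, EuclideanSpace.norm_eq]
  congr 1
  have h1 := Real.sin_sq_add_cos_sq (s/c)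
  have h2 := Real.sin_sq_add_cos_sq (lam*s/c)
  simp [Fin.sum_univ_four, Real.norm_eq_abs, sq_abs]
  nlinarith [h1, h2]

lemma norm_shB (c lam p q s : ℝ) : ‖shB c lam p q s‖ = Real.sqrt (p^2 + q^2) := by
  rw [shB, EuclideanSpace.norm_eq]
  congr 1
  have h1 := Real.sin_sq_add_cos_sq (s/c)
  have h2 := Real.sin_sq_add_cos_sq (lam*s/c)
  simp [Fin.sum_univ_four, Real.norm_eq_abs, sq_abs]
  nlinarith [h1, h2]

lemma shA_add (c lam p q p' q' s : ℝ) :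
    shA c lam p q s + shA c lam p' q' s = shA c lam (p+p') (q+q') s := by
  simp only [shA]
  ext i
  fin_cases i <;> simp [WithLp.equiv_symm_apply] <;> ring

lemma shA_smul (c lam r p q s : ℝ) :
    r • shA c lam p q s = shA c lam (r*p) (r*q) s := by
  simp only [shA]
  ext i
  fin_cases i <;> simp [WithLp.equiv_symm_apply] <;> ring

lemma shB_smul (c lam r p q s : ℝ) :
    r • shB c lam p q s = shB c lam (r*p) (r*q) s := by
  simp only [shB]
  ext i
  fin_cases i <;> simp [WithLp.equiv_symm_apply] <;> ring

lemma shB_sub (c lam p q p' q' s : ℝ) :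
    shB c lam p q s - shB c lam p' q' s = shB c lam (p-p') (q-q') s := by
  simp only [shB]
  ext i
  fin_cases i <;> simp [WithLp.equiv_symm_apply] <;> ring

lemma shA_sub (c lam p q p' q' s : ℝ) :
    shA c lam p q s - shA c lam p' q' s = shA c lam (p-p') (q-q') s := by
  simp only [shA]
  ext i
  fin_cases i <;> simp [WithLp.equiv_symm_apply] <;> ring

/-- The homogeneous curve `γ(s) = (a cos(s/c), a sin(s/c), b cos(λs/c), b sin(λs/c))`,
`c = √(a² + b²λ²)`, is a unit-speed curve in `S³` with geodesic curvature
`k₁² = a²b²(λ²−1)²/(a²+b²λ²)²` and (when `k₁ ≠ 0`) torsion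
`k₂² = λ²/(a²+b²λ²)²`. -/
theorem homogeneous_curve_invariants (lam a b c : ℝ) (ha : 0 < a) (hb : 0 < b)
    (hab : a^2 + b^2 = 1) (hc : c = Real.sqrt (a^2 + b^2 * lam^2))
    (γ : ℝ → EuclideanSpace ℝ (Fin 4))
    (hγ : ∀ s, γ s = (WithLp.equiv 2 (Fin 4 → ℝ)).symm
      ![a * Real.cos (s/c), a * Real.sin (s/c),
        b * Real.cos (lam * s / c), b * Real.sin (lam * s / c)])
    (k₁ : ℝ → ℝ) (hk₁ : ∀ s, k₁ s = ‖deriv (deriv γ) s + γ s‖) :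
    (∀ s, ‖γ s‖ = 1) ∧
    (∀ s, ‖deriv γ s‖ = 1) ∧
    (∀ s, k₁ s ^ 2 = a^2 * b^2 * (lam^2 - 1)^2 / (a^2 + b^2 * lam^2)^2) ∧
    ((∀ s, k₁ s ≠ 0) →
      ∃ (β₁ β₂ : ℝ → EuclideanSpace ℝ (Fin 4)) (k₂ : ℝ → ℝ),
        (∀ s, ‖β₁ s‖ = 1) ∧ (∀ s, ‖β₂ s‖ = 1) ∧
        (∀ s, deriv (deriv γ) s = k₁ s • β₁ s - γ s) ∧
        (∀ s, deriv β₁ s = k₂ s • β₂ s - k₁ s • deriv γ s) ∧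
        (∀ s, k₂ s ^ 2 = lam^2 / (a^2 + b^2 * lam^2)^2)) := by
  have hKpos : 0 < a^2 + b^2 * lam^2 := by nlinarith
  have hcpos : 0 < c := hc ▸ Real.sqrt_pos.2 hKpos
  have hcne : c ≠ 0 := hcpos.ne'
  have hc2 : c^2 = a^2 + b^2 * lam^2 := by rw [hc]; exact Real.sq_sqrt hKpos.le
  have hγA : γ = shA c lam a b := by funext s; rw [hγ s]; rfl
  have hγ' : deriv γ = fun s => shB c lam (a/c) (lam*b/c) s := by
    rw [hγA, deriv_shA]
  have hγ'' : deriv (deriv γ) = fun s => shA c lam (-(a/c/c)) (-(lam*(lam*b/c)/c)) s := by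
    rw [hγ']
    exact deriv_shB c lam (a/c) (lam*b/c)
  -- scalar values of γ'' + γ
  set P : ℝ := -(a/c/c) + a with hP
  set Q : ℝ := -(lam*(lam*b/c)/c) + b with hQ
  have hPv : P = a * b^2 * (lam^2-1) / c^2 := by
    rw [hP]; field_simp; linear_combination hc2 + hab
  have hQv : Q = -(a^2 * b * (lam^2-1)) / c^2 := by
    rw [hQ]; field_simp; linear_combination hc2 + lam^2*hab
  have hsum : ∀ s, deriv (deriv γ) s + γ s = shA c lam P Q s := by
    intro s; rw [hγ'', hγA]; exact shA_add c lam _ _ a b s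
  have hk1sq : ∀ s, k₁ s ^ 2 = a^2 * b^2 * (lam^2 - 1)^2 / (a^2 + b^2 * lam^2)^2 := by
    intro s
    rw [hk₁ s, hsum s, norm_shA, Real.sq_sqrt (by positivity)]
    rw [hPv, hQv, ← hc2]
    field_simp
    linear_combination (lam^2-1)^2*hab
  refine ⟨?_, ?_, hk1sq, ?_⟩
  · intro s; rw [hγA, norm_shA, hab, Real.sqrt_one]
  · intro s
    rw [hγ']
    rw [norm_shB]
    have : (a/c)^2 + (lam*b/c)^2 = 1 := by
      field_simp
      nlinarith [hc2]
    rw [this, Real.sqrt_one]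
  · intro hk
    have hne : lam^2 - 1 ≠ 0 := by
      intro h
      apply hk 0
      have h0 := hk1sq 0
      rw [h] at h0
      norm_num at h0
      exact h0
    obtain ⟨d, hd2, hdd⟩ : ∃ d : ℝ, d^2 = 1 ∧ d * (lam^2-1) = |lam^2-1| :=
      ⟨|lam^2-1| / (lam^2-1), by rw [div_pow, sq_abs]; field_simp, by field_simp⟩
    have hk1v : ∀ s, k₁ s = a * b * (d * (lam^2-1)) / c^2 := by
      intro s
      have h1 : k₁ s = Real.sqrt (k₁ s ^ 2) := by
        rw [Real.sqrt_sq]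
        rw [hk₁ s]; exact norm_nonneg _
      rw [h1, hk1sq s, hdd]
      rw [show a^2*b^2*(lam^2-1)^2/(a^2+b^2*lam^2)^2 = (a*b*|lam^2-1|/(a^2+b^2*lam^2))^2 by
        rw [div_pow, mul_pow, mul_pow, sq_abs]]
      rw [Real.sqrt_sq (by positivity), hc2]
    refine ⟨fun s => shA c lam (d*b) (-(d*a)) s,
            fun s => shB c lam (d*lam*b/c) (-(d*a/c)) s,
            fun _ => lam / c^2, ?_, ?_, ?_, ?_, ?_⟩
    · intro s
      rw [norm_shA]
      rw [show (d*b)^2 + (-(d*a))^2 = 1 by nlinarith [hd2, hab]]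
      exact Real.sqrt_one
    · intro s
      rw [norm_shB]
      rw [show (d*lam*b/c)^2 + (-(d*a/c))^2 = 1 by field_simp; linear_combination (lam^2*b^2+a^2)*hd2 - hc2]
      exact Real.sqrt_one
    · intro s
      rw [hγ'', hγA, shA_smul, shA_sub]
      have h1 : -(a/c/c) = k₁ s * (d*b) - a := by
        rw [hk1v s]; field_simp; linear_combination hc2 + hab - b^2*(lam^2-1)*hd2
      have h2 : -(lam*(lam*b/c)/c) = k₁ s * (-(d*a)) - b := by
        rw [hk1v s]; field_simp; linear_combination hc2 + lam^2*hab + a^2*(lam^2-1)*hd2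
      rw [h1, h2]
    · intro s
      rw [show (fun s => shA c lam (d*b) (-(d*a)) s) = shA c lam (d*b) (-(d*a)) from rfl,
        deriv_shA, hγ', shB_smul, shB_smul, shB_sub]
      have h1 : (d*b)/c = lam/c^2 * (d*lam*b/c) - k₁ s * (a/c) := by
        rw [hk1v s]; field_simp; linear_combination d*hc2 + d*lam^2*hab
      have h2 : lam*(-(d*a))/c = lam/c^2 * (-(d*a/c)) - k₁ s * (lam*b/c) := by
        rw [hk1v s]; field_simp; linear_combination -(lam*d)*hc2 - (lam*d)*hab
      rw [h1, h2]
    · intro s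
      rw [div_pow, ← pow_mul, show 2*2 = 4 from rfl, show c^4 = (c^2)^2 by ring, hc2]
end
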